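/- arXiv:1403.5908 — 11 statements merged into one kernel-verified Lean document; each statement's English description precedes it below -/
import Mathlib

section
/- The map φ(z) = (z+1)²/z is injective on the punctured open unit disk 𝔻 \ {0} (where 𝔻 = {z ∈ ℂ : |z| < 1}), and its image is exactly ℂ \ [0,4], i.e. φ is a bijection from 𝔻 \ {0} onto the complement in ℂ of the real segment [0,4]. -/
/-- On the unit circle, `φ(z)` takes values in (the complex image of) `[0,4]`. -/
lemma circle_val (z : ℂ) (hz : ‖z‖ = 1) :
    ∃ x ∈ Set.Icc (0:ℝ) 4, ((x : ℝ) : ℂ) = (z + 1) ^ 2 / z := by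
  have hz0 : z ≠ 0 := by
    intro h; simp [h] at hz
  have hre : |z.re| ≤ 1 := by
    have := Complex.abs_re_le_norm z
    rwa [hz] at this
  obtain ⟨hre1, hre2⟩ := abs_le.mp hre
  have hc : (starRingEnd ℂ) z * z = 1 := by
    rw [mul_comm, Complex.mul_conj]
    norm_cast
    rw [Complex.normSq_eq_norm_sq, hz]; norm_num
  refine ⟨2 + 2 * z.re, ⟨by linarith, by linarith⟩, ?_⟩
  rw [eq_div_iff hz0]
  push_cast
  have hadd := Complex.add_conj z
  push_cast at hadd
  linear_combination (-z) * hadd + hc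

/-- The map `φ(z) = (z+1)²/z` is injective on the punctured open unit disk
`𝔻 \ {0}`, and its image is exactly `ℂ \ [0,4]`. -/
theorem stmt_0 :
    Set.InjOn (fun z : ℂ => (z + 1) ^ 2 / z)
      ({z : ℂ | ‖z‖ < 1} \ {0}) ∧
    (fun z : ℂ => (z + 1) ^ 2 / z) '' ({z : ℂ | ‖z‖ < 1} \ {0}) =
      ((fun x : ℝ => (x : ℂ)) '' Set.Icc (0 : ℝ) 4)ᶜ := by
  constructor
  · -- injectivity
    rintro z ⟨hz1, hz0⟩ w ⟨hw1, hw0⟩ h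
    simp only [Set.mem_setOf_eq, Set.mem_singleton_iff] at hz1 hw1 hz0 hw0
    have hz0' : z ≠ 0 := hz0
    have hw0' : w ≠ 0 := hw0
    simp only at h
    rw [div_eq_div_iff hz0' hw0'] at h
    have hkey : (z - w) * (z * w - 1) = 0 := by linear_combination h
    have hzw : z * w ≠ 1 := by
      intro he
      have : ‖z * w‖ = 1 := by rw [he]; simp
      rw [norm_mul] at this
      nlinarith [norm_nonneg z, norm_nonneg w]
    rcases mul_eq_zero.mp hkey with h' | h'
    · exact sub_eq_zero.mp h'
    · exact absurd (sub_eq_zero.mp h') hzw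
  · ext c
    simp only [Set.mem_image, Set.mem_diff, Set.mem_setOf_eq, Set.mem_singleton_iff,
      Set.mem_compl_iff, not_exists]
    constructor
    · -- image ⊆ complement
      rintro ⟨z, ⟨hz1, hz0⟩, hφ⟩ x ⟨hx, hxc⟩
      have hz0' : z ≠ 0 := hz0
      have heq : ((x : ℝ) : ℂ) = (z + 1) ^ 2 / z := by rw [hxc, ← hφ]
      rw [eq_div_iff hz0'] at heq
      -- z^2 + (2 - x) z + 1 = 0
      have h : z ^ 2 + (2 - (x:ℂ)) * z + 1 = 0 := by linear_combination -heq
      set a := z.re with ha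
      set b := z.im with hb
      have hre : a ^ 2 - b ^ 2 + (2 - x) * a + 1 = 0 := by
        have := congrArg Complex.re h
        simpa [Complex.ext_iff, pow_two, Complex.mul_re, Complex.add_re, Complex.mul_im,
          Complex.add_im, Complex.sub_re, Complex.sub_im, Complex.ofReal_re, Complex.ofReal_im]
          using this
      have him : b * (2 * a + (2 - x)) = 0 := by
        have := congrArg Complex.im h
        simp [Complex.ext_iff, pow_two, Complex.mul_re, Complex.add_re, Complex.mul_im,
          Complex.add_im, Complex.sub_re, Complex.sub_im, Complex.ofReal_re, Complex.ofReal_im]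
          at this
        linarith [this]
      have habs : a ^ 2 + b ^ 2 < 1 := by
        have h1 : ‖z‖ ^ 2 < 1 := by
          nlinarith [norm_nonneg z]
        rw [Complex.sq_norm, Complex.normSq_apply] at h1
        nlinarith
      obtain ⟨hx0, hx4⟩ := hx
      rcases mul_eq_zero.mp him with hb0 | hlin
      · -- b = 0, z real
        have hane : a ≠ 0 := by
          intro ha0
          apply hz0'
          rw [Complex.ext_iff]
          simp [← ha, ← hb, ha0, hb0]
        have ha2 : a ^ 2 < 1 := by nlinarith
        rcases lt_trichotomy a 0 with h' | h' | h'
        · nlinarith [sq_nonneg (a + 1), mul_nonpos_of_nonneg_of_nonpos hx0 h'.le]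
        · exact hane h'
        · nlinarith [sq_nonneg (a - 1), mul_nonneg (by linarith : (0:ℝ) ≤ 4 - x) h'.le]
      · -- 2a + 2 - x = 0
        nlinarith [hre, hlin]
    · -- complement ⊆ image
      intro hc
      obtain ⟨s, hs⟩ : ∃ s : ℂ, s ^ 2 = (c - 2) ^ 2 - 4 := by
        exact IsAlgClosed.exists_pow_nat_eq ((c - 2) ^ 2 - 4) (n := 2) (by norm_num)
      set r₁ : ℂ := ((c - 2) + s) / 2 with hr₁def
      set r₂ : ℂ := ((c - 2) - s) / 2 with hr₂def
      have hprod : r₁ * r₂ = 1 := by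
        rw [hr₁def, hr₂def]
        linear_combination (-1/4 : ℂ) * hs
      have hr₁0 : r₁ ≠ 0 := left_ne_zero_of_mul_eq_one hprod
      have hr₂0 : r₂ ≠ 0 := right_ne_zero_of_mul_eq_one hprod
      have hroot₁ : (r₁ + 1) ^ 2 = c * r₁ := by
        rw [hr₁def]; linear_combination (1/4 : ℂ) * hs
      have hroot₂ : (r₂ + 1) ^ 2 = c * r₂ := by
        rw [hr₂def]; linear_combination (1/4 : ℂ) * hs
      have habs : ‖r₁‖ * ‖r₂‖ = 1 := by
        rw [← norm_mul, hprod]; simp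
      by_cases h1 : ‖r₁‖ < 1
      · exact ⟨r₁, ⟨h1, hr₁0⟩, by rw [div_eq_iff hr₁0]; exact hroot₁⟩
      · by_cases h2 : ‖r₂‖ < 1
        · exact ⟨r₂, ⟨h2, hr₂0⟩, by rw [div_eq_iff hr₂0]; exact hroot₂⟩
        · exfalso
          push_neg at h1 h2
          have habs1 : ‖r₁‖ = 1 := by nlinarith
          obtain ⟨x, hx, hxv⟩ := circle_val r₁ habs1
          apply hc x
          refine ⟨hx, ?_⟩
          rw [hxv, eq_comm, eq_div_iff hr₁0]
          exact hroot₁.symm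
end

section
/- For every t ≥ 0 and every z ∈ 𝔻 \ {0}, the point e^{t/2}·(z+1)²/z does not lie in the real segment [0,4]; consequently there is a unique point K_t(z) ∈ 𝔻 \ {0} satisfying (K_t(z)+1)²/K_t(z) = e^{t/2}·(z+1)²/z, and the resulting maps satisfy the composition semigroup law K_s(K_t(z)) = K_{s+t}(z) for all s, t ≥ 0 and z ∈ 𝔻 \ {0}, with K_0(z) = z. -/
/-- Injectivity of φ on the punctured disk. -/
lemma phi_inj {w z : ℂ} (hw1 : ‖w‖ < 1) (hw0 : w ≠ 0)
    (hz1 : ‖z‖ < 1) (hz0 : z ≠ 0)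
    (h : (w + 1) ^ 2 / w = (z + 1) ^ 2 / z) : w = z := by
  have h' : (w + 1) ^ 2 * z = (z + 1) ^ 2 * w := by
    field_simp at h; linear_combination h
  have key : (w - z) * (w * z - 1) = 0 := by linear_combination h'
  rcases mul_eq_zero.1 key with h1 | h2
  · exact sub_eq_zero.1 h1
  · exfalso
    have : ‖(w * z)‖ = 1 := by
      rw [sub_eq_zero.1 h2]; simp
    rw [norm_mul] at this
    nlinarith [norm_nonneg w, norm_nonneg z]


/-- φ(z) avoids [0,4] for z in the punctured disk. -/
lemma phi_avoid {z : ℂ} (hz1 : ‖z‖ < 1) (hz0 : z ≠ 0)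
    {x : ℝ} (hx0 : 0 ≤ x) (hx4 : x ≤ 4) : (x : ℂ) ≠ (z + 1) ^ 2 / z := by
  intro h
  have h1 : z ^ 2 + 2 * z + 1 = (x : ℂ) * z := by
    field_simp at h; linear_combination -h
  have h2 : (starRingEnd ℂ) z ^ 2 + 2 * (starRingEnd ℂ) z + 1
      = (x : ℂ) * (starRingEnd ℂ) z := by
    have := congrArg (starRingEnd ℂ) h1
    simpa [map_ofNat] using this
  have key : (z - (starRingEnd ℂ) z) * (z + (starRingEnd ℂ) z + 2 - (x : ℂ)) = 0 := by
    linear_combination h1 - h2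
  rcases mul_eq_zero.1 key with hc | hc
  · -- z real
    have hzre : z = (z.re : ℂ) := (Complex.conj_eq_iff_re.1 (sub_eq_zero.1 hc).symm).symm
    set a := z.re with ha
    have ha0 : a ≠ 0 := by
      intro h0; apply hz0; rw [hzre, h0]; simp
    have haabs : |a| < 1 := by
      calc |a| ≤ ‖z‖ := Complex.abs_re_le_norm z
        _ < 1 := hz1
    have hreal : a ^ 2 + 2 * a + 1 = x * a := by
      have := h1
      rw [hzre] at this
      exact_mod_cast this
    rcases lt_or_gt_of_ne ha0 with hneg | hpos
    · nlinarith [sq_nonneg (a + 1), abs_lt.1 haabs, mul_nonpos_of_nonneg_of_nonpos hx0 (le_of_lt hneg)]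
    · nlinarith [sq_nonneg (a - 1), abs_lt.1 haabs]
  · -- z z̄ = 1
    have hsum : z + (starRingEnd ℂ) z = (x : ℂ) - 2 := by linear_combination hc
    have hprod : z * (starRingEnd ℂ) z = 1 := by linear_combination z * hsum - h1
    have : (Complex.normSq z : ℂ) = 1 := by rw [← Complex.mul_conj]; exact hprod
    have hn : Complex.normSq z = 1 := by exact_mod_cast this
    have : ‖z‖ ^ 2 < 1 := by nlinarith [norm_nonneg z]
    rw [Complex.sq_norm, hn] at this
    exact lt_irrefl 1 this


lemma phi_exists {m : ℂ} (hm : ∀ x : ℝ, 0 ≤ x → x ≤ 4 → (x : ℂ) ≠ m) :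
    ∃ w : ℂ, ‖w‖ < 1 ∧ w ≠ 0 ∧ (w + 1) ^ 2 / w = m := by
  obtain ⟨d, hd⟩ := IsAlgClosed.exists_pow_nat_eq ((m - 2) ^ 2 - 4) (n := 2) (by norm_num)
  set w₁ := ((m - 2) + d) / 2 with hw₁
  set w₂ := ((m - 2) - d) / 2 with hw₂
  have hprod : w₁ * w₂ = 1 := by
    rw [hw₁, hw₂]; field_simp; linear_combination -hd
  have hw₁0 : w₁ ≠ 0 := by intro h; rw [h, zero_mul] at hprod; exact one_ne_zero hprod.symm
  have hw₂0 : w₂ ≠ 0 := by intro h; rw [h, mul_zero] at hprod; exact one_ne_zero hprod.symm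
  have hsum : w₁ + w₂ = m - 2 := by rw [hw₁, hw₂]; ring
  have hq1 : (w₁ + 1) ^ 2 = m * w₁ := by linear_combination w₁ * hsum - hprod
  have hq2 : (w₂ + 1) ^ 2 = m * w₂ := by linear_combination w₂ * hsum - hprod
  have hcirc : ∀ w : ℂ, w ≠ 0 → (w + 1) ^ 2 = m * w → ‖w‖ ≠ 1 := by
    intro w hw0 hroot habs
    have h1 : w * (starRingEnd ℂ) w = 1 := by
      rw [Complex.mul_conj, ← Complex.sq_norm, habs]; norm_num
    have h3 : w + (starRingEnd ℂ) w = 2 * (w.re : ℂ) := by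
      rw [Complex.add_conj]; push_cast; ring
    have h4 : m * w = ((2 + 2 * w.re : ℝ) : ℂ) * w := by
      push_cast
      linear_combination -hroot + w * h3 - h1
    have hm' : m = ((2 + 2 * w.re : ℝ) : ℂ) := mul_right_cancel₀ hw0 h4
    have hre1 : |w.re| ≤ 1 := by
      calc |w.re| ≤ ‖w‖ := Complex.abs_re_le_norm w
        _ = 1 := habs
    exact hm (2 + 2 * w.re) (by linarith [abs_le.1 hre1 |>.1])
      (by linarith [abs_le.1 hre1 |>.2]) hm'.symm
  have habsprod : ‖w₁‖ * ‖w₂‖ = 1 := by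
    rw [← norm_mul, hprod]; simp
  by_cases hlt : ‖w₁‖ < 1
  · refine ⟨w₁, hlt, hw₁0, ?_⟩
    rw [hq1]; field_simp
  · have hgt : 1 < ‖w₁‖ :=
      lt_of_le_of_ne (le_of_not_gt hlt) (Ne.symm (hcirc w₁ hw₁0 hq1))
    have h2lt : ‖w₂‖ < 1 := by
      nlinarith [norm_nonneg w₂]
    refine ⟨w₂, h2lt, hw₂0, ?_⟩
    rw [hq2]; field_simp

/-- The scaled point also avoids `[0,4]`. -/
lemma phi_avoid_scaled {t : ℝ} (ht : 0 ≤ t) {z : ℂ} (hz1 : ‖z‖ < 1)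
    (hz0 : z ≠ 0) {x : ℝ} (hx0 : 0 ≤ x) (hx4 : x ≤ 4) :
    (x : ℂ) ≠ Complex.exp (t / 2) * (z + 1) ^ 2 / z := by
  intro hx
  set y : ℝ := x * Real.exp (-(t / 2)) with hy
  have hexple : Real.exp (-(t / 2)) ≤ 1 := Real.exp_le_one_iff.2 (by linarith)
  have hexppos : 0 < Real.exp (-(t / 2)) := Real.exp_pos _
  have hy0 : 0 ≤ y := mul_nonneg hx0 (le_of_lt hexppos)
  have hy4 : y ≤ 4 := by nlinarith
  have hkey : Complex.exp (↑t / 2) * Complex.exp (-(↑t / 2)) = 1 := by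
    rw [← Complex.exp_add]; norm_num
  have hyz : (y : ℂ) = (z + 1) ^ 2 / z := by
    have : (y : ℂ) = (x : ℂ) * Complex.exp (-(↑t / 2)) := by
      rw [hy]; push_cast [Complex.ofReal_exp]; ring
    rw [this, hx]
    calc Complex.exp (↑t / 2) * (z + 1) ^ 2 / z * Complex.exp (-(↑t / 2))
        = (z + 1) ^ 2 / z * (Complex.exp (↑t / 2) * Complex.exp (-(↑t / 2))) := by ring
      _ = (z + 1) ^ 2 / z := by rw [hkey, mul_one]
  exact phi_avoid hz1 hz0 hy0 hy4 hyz

/-- For every `t ≥ 0` and `z ∈ 𝔻 \ {0}`, the point `e^{t/2}(z+1)²/z` does not lie in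
the real segment `[0,4]`; consequently there is a unique `K_t(z) ∈ 𝔻 \ {0}` with
`(K_t(z)+1)²/K_t(z) = e^{t/2}(z+1)²/z`, and the resulting maps form a composition
semigroup: `K_s(K_t(z)) = K_{s+t}(z)`, with `K_0(z) = z`. -/
theorem stmt_1 :
    (∀ t : ℝ, 0 ≤ t → ∀ z : ℂ, ‖z‖ < 1 → z ≠ 0 →
      (¬ ∃ x : ℝ, 0 ≤ x ∧ x ≤ 4 ∧ (x : ℂ) = Complex.exp (t / 2) * (z + 1) ^ 2 / z) ∧
      (∃! w : ℂ, (‖w‖ < 1 ∧ w ≠ 0) ∧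
        (w + 1) ^ 2 / w = Complex.exp (t / 2) * (z + 1) ^ 2 / z)) ∧
    (∀ K : ℝ → ℂ → ℂ,
      (∀ t : ℝ, 0 ≤ t → ∀ z : ℂ, ‖z‖ < 1 → z ≠ 0 →
        (‖K t z‖ < 1 ∧ K t z ≠ 0) ∧
        (K t z + 1) ^ 2 / K t z = Complex.exp (t / 2) * (z + 1) ^ 2 / z) →
      ((∀ s t : ℝ, 0 ≤ s → 0 ≤ t → ∀ z : ℂ, ‖z‖ < 1 → z ≠ 0 →
          K s (K t z) = K (s + t) z) ∧
        (∀ z : ℂ, ‖z‖ < 1 → z ≠ 0 → K 0 z = z))) := by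
  constructor
  · intro t ht z hz1 hz0
    constructor
    · rintro ⟨x, hx0, hx4, hx⟩
      exact phi_avoid_scaled ht hz1 hz0 hx0 hx4 hx
    · obtain ⟨w, hw1, hw0, hweq⟩ :=
        phi_exists (m := Complex.exp (t / 2) * (z + 1) ^ 2 / z)
          (fun x hx0 hx4 => phi_avoid_scaled ht hz1 hz0 hx0 hx4)
      refine ⟨w, ⟨⟨hw1, hw0⟩, hweq⟩, ?_⟩
      rintro w' ⟨⟨hw'1, hw'0⟩, hw'eq⟩
      exact phi_inj hw'1 hw'0 hw1 hw0 (hw'eq.trans hweq.symm)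
  · intro K hK
    have hexp : ∀ s t : ℝ, Complex.exp (↑s / 2) * Complex.exp (↑t / 2)
        = Complex.exp (↑(s + t) / 2) := by
      intro s t
      rw [← Complex.exp_add]
      congr 1
      push_cast
      ring
    constructor
    · intro s t hs ht z hz1 hz0
      obtain ⟨⟨hw1, hw0⟩, hweq⟩ := hK t ht z hz1 hz0
      obtain ⟨⟨hv1, hv0⟩, hveq⟩ := hK s hs (K t z) hw1 hw0
      obtain ⟨⟨hu1, hu0⟩, hueq⟩ := hK (s + t) (by linarith) z hz1 hz0
      apply phi_inj hv1 hv0 hu1 hu0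
      rw [hveq, hueq]
      calc Complex.exp (↑s / 2) * (K t z + 1) ^ 2 / K t z
          = Complex.exp (↑s / 2) * ((K t z + 1) ^ 2 / K t z) := by ring
        _ = Complex.exp (↑s / 2) * (Complex.exp (↑t / 2) * (z + 1) ^ 2 / z) := by rw [hweq]
        _ = Complex.exp (↑s / 2) * Complex.exp (↑t / 2) * (z + 1) ^ 2 / z := by ring
        _ = Complex.exp (↑(s + t) / 2) * (z + 1) ^ 2 / z := by rw [hexp]
    · intro z hz1 hz0
      obtain ⟨⟨hw1, hw0⟩, hweq⟩ := hK 0 le_rfl z hz1 hz0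
      apply phi_inj hw1 hw0 hz1 hz0
      rw [hweq]
      norm_num
end

section
/- For every fixed z ∈ 𝔻 \ {0}, the function t ↦ K_t(z) (where K_t(z) ∈ 𝔻 \ {0} is the unique point with (K_t(z)+1)²/K_t(z) = e^{t/2}(z+1)²/z) is differentiable on [0,∞) and satisfies the differential equation 2·(d/dt)K_t(z) = −K_t(z)·(1+K_t(z))/(1−K_t(z)) with initial condition K_0(z) = z. -/
open Filter Topology

/-- Uniqueness of the point in the punctured disk with given `φ` value. -/
lemma stmt_2_uniq (u v : ℂ) (hu : ‖u‖ < 1) (hu0 : u ≠ 0)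
    (hv : ‖v‖ < 1) (hv0 : v ≠ 0)
    (h : (u + 1) ^ 2 / u = (v + 1) ^ 2 / v) : u = v := by
  have h' : (u + 1) ^ 2 * v = (v + 1) ^ 2 * u := by
    field_simp at h
    linear_combination h
  have key : (u - v) * (u * v - 1) = 0 := by linear_combination h'
  rcases mul_eq_zero.1 key with h1 | h1
  · exact sub_eq_zero.mp h1
  · exfalso
    have huv : u * v = 1 := sub_eq_zero.mp h1
    have : ‖u * v‖ < 1 := by
      rw [norm_mul]
      calc ‖u‖ * ‖v‖ < 1 * 1 :=
        mul_lt_mul'' hu hv (norm_nonneg u) (norm_nonneg v)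
      _ = 1 := one_mul 1
    rw [huv] at this
    simp at this

/-- For fixed `z ∈ 𝔻 \ {0}`, the function `t ↦ K_t(z)` (the unique point of `𝔻 \ {0}`
with `(K_t(z)+1)²/K_t(z) = e^{t/2}(z+1)²/z`) is differentiable on `[0,∞)` and satisfies
`2 (d/dt) K_t(z) = -K_t(z)(1+K_t(z))/(1-K_t(z))`, with `K_0(z) = z`. -/
theorem stmt_2 (z : ℂ) (hz : ‖z‖ < 1) (hz0 : z ≠ 0)
    (K : ℝ → ℂ)
    (hK : ∀ t : ℝ, 0 ≤ t → (‖K t‖ < 1 ∧ K t ≠ 0) ∧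
      (K t + 1) ^ 2 / K t = Complex.exp (t / 2) * (z + 1) ^ 2 / z) :
    (∀ t : ℝ, 0 ≤ t →
      HasDerivWithinAt K (-(K t * (1 + K t) / (1 - K t)) / 2) (Set.Ici (0 : ℝ)) t) ∧
    K 0 = z := by
  constructor
  · intro t ht
    obtain ⟨⟨haK, haK0⟩, heq⟩ := hK t ht
    set a := K t with ha_def
    have ha1 : a ≠ 1 := by intro h; rw [h] at haK; simp at haK
    have ha1' : a ≠ -1 := by intro h; rw [h] at haK; simp at haK
    have ha2 : a ^ 2 ≠ 1 := by
      intro h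
      have hfac : (a - 1) * (a + 1) = 0 := by linear_combination h
      rcases mul_eq_zero.1 hfac with h1 | h1
      · exact ha1 (by linear_combination h1)
      · exact ha1' (by linear_combination h1)
    -- the map φ and its strict derivative at a
    have hf0 : HasStrictDerivAt (fun w : ℂ => (w + 1) * (w + 1) / w)
        (((1 * (a + 1) + (a + 1) * 1) * a - (a + 1) * (a + 1) * 1) / a ^ 2) a :=
      (((hasStrictDerivAt_id a).add_const 1).mul
        ((hasStrictDerivAt_id a).add_const 1)).div (hasStrictDerivAt_id a) haK0
    have hf : HasStrictDerivAt (fun w : ℂ => (w + 1) ^ 2 / w) ((a ^ 2 - 1) / a ^ 2) a := by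
      have hfun : (fun w : ℂ => (w + 1) ^ 2 / w) = fun w : ℂ => (w + 1) * (w + 1) / w := by
        funext w; ring
      rw [hfun]
      convert hf0 using 1
      ring
    have hd0 : (a ^ 2 - 1) / a ^ 2 ≠ 0 :=
      div_ne_zero (sub_ne_zero.mpr ha2) (pow_ne_zero 2 haK0)
    set ψ := hf.localInverse _ _ _ hd0 with hψ_def
    have hinv : HasStrictDerivAt ψ ((a ^ 2 - 1) / a ^ 2)⁻¹ ((a + 1) ^ 2 / a) :=
      hf.to_localInverse hd0
    have hψa : ψ ((a + 1) ^ 2 / a) = a :=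
      (hf.hasStrictFDerivAt_equiv hd0).localInverse_apply_image
    have hψcont : ContinuousAt ψ ((a + 1) ^ 2 / a) :=
      (hf.hasStrictFDerivAt_equiv hd0).localInverse_continuousAt
    have hrt : ∀ᶠ y in 𝓝 ((a + 1) ^ 2 / a), (ψ y + 1) ^ 2 / ψ y = y :=
      (hf.hasStrictFDerivAt_equiv hd0).eventually_right_inverse
    -- the driving function g
    set g : ℝ → ℂ := fun s => Complex.exp (s / 2) * (z + 1) ^ 2 / z with hg_def
    have hgt : g t = (a + 1) ^ 2 / a := heq.symm
    have hg : HasDerivAt g (Complex.exp (t / 2) * ((1 : ℂ) / 2) * (z + 1) ^ 2 / z) t := by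
      have h1 : HasDerivAt (fun s : ℝ => ((s : ℂ) / 2)) ((1 : ℂ) / 2) t := by
        simpa using (Complex.ofRealCLM.hasDerivAt (x := t)).div_const 2
      exact ((h1.cexp).mul_const ((z + 1) ^ 2)).div_const z
    have hgcont : ContinuousAt g t := hg.continuousAt
    -- eventually, K s = ψ (g s)
    have hgcont' : Filter.Tendsto g (𝓝 t) (𝓝 ((a + 1) ^ 2 / a)) := hgt ▸ hgcont
    have hev1 : ∀ᶠ s in 𝓝 t, (ψ (g s) + 1) ^ 2 / ψ (g s) = g s :=
      hgcont'.eventually hrt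
    have hψga : ψ (g t) = a := by rw [hgt]; exact hψa
    have hψgcont : ContinuousAt (fun s => ψ (g s)) t := by
      have h := hψcont.tendsto.comp hgcont'
      rw [hψa] at h
      unfold ContinuousAt
      simp only []
      rw [hψga]
      exact h
    have hev2 : ∀ᶠ s in 𝓝 t, ‖ψ (g s)‖ < 1 ∧ ψ (g s) ≠ 0 := by
      have h1 : ∀ᶠ w in 𝓝 (ψ (g t)), ‖w‖ < 1 ∧ w ≠ 0 := by
        rw [hψga]
        exact ((continuous_norm.continuousAt.eventually_lt_const haK).and
          (eventually_ne_nhds haK0))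
      exact hψgcont.eventually h1
    have hKeq : K =ᶠ[𝓝[Set.Ici (0:ℝ)] t] fun s => ψ (g s) := by
      filter_upwards [nhdsWithin_le_nhds hev1, nhdsWithin_le_nhds hev2,
        self_mem_nhdsWithin] with s hs1 hs2 hs
      obtain ⟨⟨hKs, hKs0⟩, heqs⟩ := hK s hs
      exact stmt_2_uniq (K s) (ψ (g s)) hKs hKs0 hs2.1 hs2.2 (by rw [heqs, hs1])
    have hKt : K t = ψ (g t) := hψga.symm
    -- the composite has the desired derivative
    have hcomp : HasDerivAt (fun s => ψ (g s))
        (((a ^ 2 - 1) / a ^ 2)⁻¹ * (Complex.exp (t / 2) * ((1 : ℂ) / 2) * (z + 1) ^ 2 / z)) t := by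
      have := hinv.hasDerivAt
      rw [← hgt] at this
      exact this.comp t hg
    have hfinal : ((a ^ 2 - 1) / a ^ 2)⁻¹ *
        (Complex.exp (t / 2) * ((1 : ℂ) / 2) * (z + 1) ^ 2 / z) =
        -(a * (1 + a) / (1 - a)) / 2 := by
      have hE : Complex.exp (t / 2) * (z + 1) ^ 2 / z = (a + 1) ^ 2 / a := heq.symm
      have h1a : (1 : ℂ) - a ≠ 0 := sub_ne_zero.mpr (fun h => ha1 h.symm)
      have ha21 : a ^ 2 - 1 ≠ 0 := sub_ne_zero.mpr ha2
      have h2 : Complex.exp (t / 2) * ((1 : ℂ) / 2) * (z + 1) ^ 2 / z = ((a + 1) ^ 2 / a) / 2 := by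
        rw [← hE]; ring
      rw [h2]
      field_simp
      ring
    rw [← hfinal]
    exact (hcomp.hasDerivWithinAt).congr_of_eventuallyEq hKeq hKt
  · obtain ⟨⟨hK0, hK00⟩, heq0⟩ := hK 0 le_rfl
    apply stmt_2_uniq (K 0) z hK0 hK00 hz hz0
    rw [heq0]
    norm_num
end

section
/- Let t > 0 and set c_t = 2e^{−t/2} − 1. For every z ∈ 𝔻 \ {0}, with K_t(z) ∈ 𝔻 \ {0} the unique point satisfying (K_t(z)+1)²/K_t(z) = e^{t/2}(z+1)²/z, one has K_t(z)/(1 − K_t(z)) = −1/2 + (z+1)/(2·√(1 − 2z·c_t + z²)), where √ denotes the principal branch of the complex square root (well defined since 1 − 2z·c_t + z² ∉ (−∞,0] for z ∈ 𝔻). -/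
open Complex Real

private lemma argC (u v : ℂ) (ψ : ℝ) (hu2 : |u.arg| < π/2) (hv2 : |v.arg| < π/2)
    (hψ1 : 0 ≤ ψ) (hψ : ψ ≤ π/2)
    (hpos : 0 < (Complex.exp (-(ψ:ℂ) * Complex.I) * u * (starRingEnd ℂ) v).re) :
    |u.arg - v.arg - ψ| < π/2 := by
  have hπ := Real.pi_pos
  set x : ℝ := u.arg - v.arg - ψ with hx
  have hmul : Complex.exp (-(ψ:ℂ) * Complex.I) * Complex.exp ((u.arg:ℂ) * I) *
      Complex.exp (-((v.arg:ℂ) * I)) = Complex.exp ((x:ℂ) * Complex.I) := by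
    rw [← Complex.exp_add, ← Complex.exp_add]
    congr 1
    push_cast [hx]
    ring
  have key : Complex.exp (-(ψ:ℂ) * Complex.I) * u * (starRingEnd ℂ) v
      = ((‖u‖ * ‖v‖ : ℝ) : ℂ) * Complex.exp ((x:ℂ) * Complex.I) := by
    conv_lhs => rw [← Complex.norm_mul_exp_arg_mul_I u, ← Complex.norm_mul_exp_arg_mul_I v]
    rw [map_mul, conj_ofReal, ← Complex.exp_conj]
    have hc : (starRingEnd ℂ) ((v.arg : ℂ) * I) = -((v.arg : ℂ) * I) := by simp
    rw [hc, ← hmul]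
    push_cast
    ring
  have hcos : 0 < Real.cos x := by
    rw [key, re_ofReal_mul, Complex.exp_ofReal_mul_I_re] at hpos
    by_contra hc
    push_neg at hc
    have habs : 0 ≤ ‖u‖ * ‖v‖ := by positivity
    nlinarith
  have h1 := abs_lt.mp hu2
  have h2 := abs_lt.mp hv2
  have hxu : x < π := by rw [hx]; linarith
  have hxl : -(π + π/2) < x := by rw [hx]; linarith
  rw [abs_lt]
  constructor
  · by_contra hcon
    push_neg at hcon
    have : Real.cos x ≤ 0 := by
      have := Real.cos_nonpos_of_pi_div_two_le_of_le (x := -x) (by linarith) (by linarith)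
      rwa [Real.cos_neg] at this
    linarith
  · by_contra hcon
    push_neg at hcon
    have : Real.cos x ≤ 0 := Real.cos_nonpos_of_pi_div_two_le_of_le hcon (by linarith)
    linarith

set_option maxHeartbeats 1000000 in
/-- For `t > 0`, `c_t = 2e^{-t/2} - 1`, and `z ∈ 𝔻 \ {0}`, if `w = K_t(z)` is the unique
point of `𝔻 \ {0}` with `(w+1)²/w = e^{t/2}(z+1)²/z`, then
`w/(1-w) = -1/2 + (z+1)/(2√(1 - 2 z c_t + z²))`, with the principal complex square root. -/
theorem stmt_4 (t : ℝ) (ht : 0 < t) (z : ℂ) (hz : ‖z‖ < 1) (hz0 : z ≠ 0)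
    (w : ℂ) (hw : ‖w‖ < 1 ∧ w ≠ 0)
    (hweq : (w + 1) ^ 2 / w = Complex.exp (t / 2) * (z + 1) ^ 2 / z) :
    w / (1 - w) =
      -(1 / 2) + (z + 1) /
        (2 * ((1 - 2 * z * ((2 * Real.exp (-t / 2) - 1 : ℝ) : ℂ) + z ^ 2) ^ (1 / 2 : ℂ))) := by
  have hπ := Real.pi_pos
  obtain ⟨hwlt, hw0⟩ := hw
  set q : ℂ := Complex.exp (t/2) with hqdef
  clear_value q
  have hq0 : q ≠ 0 := by rw [hqdef]; exact Complex.exp_ne_zero _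
  set c : ℝ := 2 * Real.exp (-t / 2) - 1 with hcdef
  clear_value c
  have hexppos := Real.exp_pos (-t/2)
  have hexplt : Real.exp (-t/2) < 1 := by
    rw [Real.exp_lt_one_iff]; linarith
  have hc1 : c < 1 := by rw [hcdef]; linarith
  have hc2 : -1 < c := by rw [hcdef]; linarith
  have hqc : q * (c : ℂ) = 2 - q := by
    have h1 : Complex.exp ((t:ℂ)/2) * Complex.exp (((-t/2 : ℝ) : ℂ)) = 1 := by
      rw [← Complex.exp_add, show (t:ℂ)/2 + ((-t/2 : ℝ) : ℂ) = 0 by push_cast; ring,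
        Complex.exp_zero]
    have h2 : (c:ℂ) = 2 * Complex.exp (((-t/2 : ℝ) : ℂ)) - 1 := by
      rw [hcdef]; push_cast [Complex.ofReal_exp]; ring
    rw [h2, hqdef]
    linear_combination 2 * h1
  set D : ℂ := 1 - 2 * z * (c:ℂ) + z ^ 2 with hDdef
  clear_value D
  -- basic nonvanishing facts
  have hzre : |z.re| ≤ ‖z‖ := Complex.abs_re_le_norm z
  have hz1re : 0 < (1 + z).re := by
    simp only [Complex.add_re, Complex.one_re]
    have := abs_le.mp hzre
    linarith
  have hz1 : (1 : ℂ) + z ≠ 0 := by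
    intro h
    rw [h] at hz1re
    simp at hz1re
  have h1mw : (1 : ℂ) - w ≠ 0 := by
    intro h
    have : w = 1 := by linear_combination -h
    rw [this] at hwlt; simp at hwlt
  have h1pw : (1 : ℂ) + w ≠ 0 := by
    intro h
    have : w = -1 := by linear_combination h
    rw [this] at hwlt; simp at hwlt
  -- the quadratic relation
  have heq2 : (w + 1) ^ 2 * z = q * (z + 1) ^ 2 * w := by
    field_simp at hweq
    linear_combination hweq
  -- angle setup
  set θ : ℝ := Real.arccos c with hθdef
  clear_value θ
  have hθ1 : 0 < θ := by rw [hθdef]; exact Real.arccos_pos.2 hc1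
  have hθ2 : θ < π := by
    rw [hθdef]
    rcases lt_or_eq_of_le (Real.arccos_le_pi c) with h | h
    · exact h
    · exact absurd (Real.arccos_eq_pi.mp h) (by linarith)
  have hcosθ : Real.cos θ = c := by rw [hθdef]; exact Real.cos_arccos (le_of_lt hc2) (le_of_lt hc1)
  set e : ℂ := Complex.exp (((θ/2 : ℝ):ℂ) * I) with hedef
  clear_value e
  set ω : ℂ := Complex.exp (((θ : ℝ):ℂ) * I) with hωdef
  clear_value ω
  set ω' : ℂ := Complex.exp (((-θ : ℝ):ℂ) * I) with hω'def
  clear_value ω'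
  have hωe : ω = e * e := by
    rw [hωdef, hedef, ← Complex.exp_add]
    congr 1
    push_cast
    ring
  have hω'conj : (starRingEnd ℂ) ω' = e * e := by
    rw [← hωe, hω'def, hωdef, ← Complex.exp_conj]
    congr 1
    simp [Complex.conj_ofReal]
  have hee : (starRingEnd ℂ) e * e = 1 := by
    rw [mul_comm, Complex.mul_conj]
    rw [Complex.normSq_eq_norm_sq, hedef, Complex.norm_exp_ofReal_mul_I]
    norm_num
  have hωabs : ‖ω‖ = 1 := by rw [hωdef]; exact Complex.norm_exp_ofReal_mul_I _
  have hω'abs : ‖ω'‖ = 1 := by rw [hω'def]; exact Complex.norm_exp_ofReal_mul_I _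
  have hsum : ω + ω' = 2 * (c:ℂ) := by
    rw [hωdef, hω'def, Complex.exp_mul_I, Complex.exp_mul_I,
      show ((-θ : ℝ):ℂ) = -((θ:ℝ):ℂ) by push_cast; ring, Complex.cos_neg, Complex.sin_neg,
      ← Complex.ofReal_cos, ← Complex.ofReal_sin, hcosθ]
    ring
  have hprod : ω * ω' = 1 := by
    rw [hωdef, hω'def, ← Complex.exp_add,
      show ((θ:ℝ):ℂ) * I + ((-θ : ℝ):ℂ) * I = 0 by push_cast; ring, Complex.exp_zero]
  set a : ℂ := 1 - ω * z with hadef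
  clear_value a
  set b : ℂ := 1 - ω' * z with hbdef
  clear_value b
  have hD : D = a * b := by
    rw [hDdef, hadef, hbdef]
    linear_combination z * hsum + (-z^2) * hprod
  have habs_ωz : ‖ω * z‖ < 1 := by rw [norm_mul, hωabs, one_mul]; exact hz
  have habs_ω'z : ‖ω' * z‖ < 1 := by rw [norm_mul, hω'abs, one_mul]; exact hz
  have haRe : 0 < a.re := by
    rw [hadef]
    simp only [Complex.sub_re, Complex.one_re]
    have := Complex.re_le_norm (ω * z)
    linarith
  have hbRe : 0 < b.re := by
    rw [hbdef]
    simp only [Complex.sub_re, Complex.one_re]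
    have := Complex.re_le_norm (ω' * z)
    linarith
  have ha0 : a ≠ 0 := by
    intro h; rw [h] at haRe; simp at haRe
  have hb0 : b ≠ 0 := by
    intro h; rw [h] at hbRe; simp at hbRe
  have hD0 : D ≠ 0 := by rw [hD]; exact mul_ne_zero ha0 hb0
  set s : ℂ := D ^ (1/2 : ℂ) with hsdef
  clear_value s
  have hs0 : s ≠ 0 := by
    rw [hsdef]
    simp [Complex.cpow_eq_zero_iff, hD0]
  have hs2 : s ^ 2 = D := by
    rw [hsdef, show (1/2 : ℂ) = (((2:ℕ)):ℂ)⁻¹ by norm_num]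
    exact_mod_cast Complex.cpow_nat_inv_pow D two_ne_zero
  -- arg bounds
  have harga : |a.arg| < π/2 := Complex.abs_arg_lt_pi_div_two_iff.2 (Or.inl haRe)
  have hargb : |b.arg| < π/2 := Complex.abs_arg_lt_pi_div_two_iff.2 (Or.inl hbRe)
  have hargz1 : |(1+z).arg| < π/2 := Complex.abs_arg_lt_pi_div_two_iff.2 (Or.inl hz1re)
  have hargD : D.arg = a.arg + b.arg := by
    rw [hD]
    apply Complex.arg_mul ha0 hb0
    constructor
    · have := abs_lt.mp harga; have := abs_lt.mp hargb; linarith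
    · have := abs_lt.mp harga; have := abs_lt.mp hargb; linarith
  -- positivity computations
  have hnormz : Complex.normSq z < 1 := by
    rw [Complex.normSq_eq_norm_sq]
    nlinarith [norm_nonneg z]
  have hcoshalf : 0 < Real.cos (θ/2) := by
    apply Real.cos_pos_of_mem_Ioo
    constructor <;> [linarith; linarith]
  have hP1 : 0 < (Complex.exp (-((θ/2 : ℝ):ℂ) * I) * a * (starRingEnd ℂ) (1 + z)).re := by
    have h1 : Complex.exp (-((θ/2:ℝ):ℂ) * I) = (starRingEnd ℂ) e := by
      rw [hedef, ← Complex.exp_conj]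
      congr 1
      rw [map_mul, Complex.conj_ofReal, Complex.conj_I]
      ring
    have key : Complex.exp (-((θ/2 : ℝ):ℂ) * I) * a * (starRingEnd ℂ) (1 + z)
        = (starRingEnd ℂ) e + (starRingEnd ℂ) (e * z) - e * z
          - e * ((Complex.normSq z : ℝ):ℂ) := by
      rw [h1, hadef, hωe, map_add, map_one, map_mul, ← Complex.mul_conj z]
      linear_combination (-(e * z * (1 + (starRingEnd ℂ) z))) * hee
    rw [key]
    simp only [Complex.sub_re, Complex.add_re, Complex.conj_re, Complex.mul_re,
      Complex.ofReal_re, Complex.ofReal_im, mul_zero, sub_zero]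
    have : e.re = Real.cos (θ/2) := by rw [hedef]; exact Complex.exp_ofReal_mul_I_re _
    rw [this]
    nlinarith
  have hP2 : 0 < (Complex.exp (-((θ/2 : ℝ):ℂ) * I) * (1 + z) * (starRingEnd ℂ) b).re := by
    have h1 : Complex.exp (-((θ/2:ℝ):ℂ) * I) = (starRingEnd ℂ) e := by
      rw [hedef, ← Complex.exp_conj]
      congr 1
      rw [map_mul, Complex.conj_ofReal, Complex.conj_I]
      ring
    have key : Complex.exp (-((θ/2 : ℝ):ℂ) * I) * (1 + z) * (starRingEnd ℂ) b
        = (starRingEnd ℂ) e + (starRingEnd ℂ) e * z - e * (starRingEnd ℂ) z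
          - e * ((Complex.normSq z : ℝ):ℂ) := by
      rw [h1, hbdef, map_sub, map_one, map_mul, hω'conj, ← Complex.mul_conj z]
      linear_combination (-(e * (starRingEnd ℂ) z * (1 + z))) * hee
    rw [key]
    simp only [Complex.sub_re, Complex.add_re, Complex.conj_re, Complex.conj_im, Complex.mul_re,
      Complex.ofReal_re, Complex.ofReal_im, mul_zero, sub_zero]
    have : e.re = Real.cos (θ/2) := by rw [hedef]; exact Complex.exp_ofReal_mul_I_re _
    rw [this]
    nlinarith
  have hC1 : |a.arg - (1+z).arg - θ/2| < π/2 :=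
    argC a (1+z) (θ/2) harga hargz1 (by linarith) (by linarith) hP1
  have hC2 : |(1+z).arg - b.arg - θ/2| < π/2 :=
    argC (1+z) b (θ/2) hargz1 hargb (by linarith) (by linarith) hP2
  -- the crux : Re((z+1) conj s) > 0
  have hβδ : |(1+z).arg - D.arg / 2| < π/2 := by
    rw [hargD]
    have := abs_lt.mp hC1
    have := abs_lt.mp hC2
    rw [abs_lt]
    constructor <;> [linarith; linarith]
  have hRlog : 0 < Real.exp ((Complex.log D).re * (1/2)) := Real.exp_pos _
  have hsre : s.re = Real.exp ((Complex.log D).re * (1/2)) * Real.cos (D.arg / 2) := by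
    rw [hsdef, Complex.cpow_def_of_ne_zero hD0, Complex.exp_re]
    have h1 : (Complex.log D * (1/2)).re = (Complex.log D).re * (1/2) := by
      simp [Complex.mul_re]
    have h2 : (Complex.log D * (1/2)).im = D.arg / 2 := by
      simp [Complex.mul_im, Complex.log_im]
      ring
    rw [h1, h2]
  have hsim : s.im = Real.exp ((Complex.log D).re * (1/2)) * Real.sin (D.arg / 2) := by
    rw [hsdef, Complex.cpow_def_of_ne_zero hD0, Complex.exp_im]
    have h1 : (Complex.log D * (1/2)).re = (Complex.log D).re * (1/2) := by
      simp [Complex.mul_re]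
    have h2 : (Complex.log D * (1/2)).im = D.arg / 2 := by
      simp [Complex.mul_im, Complex.log_im]
      ring
    rw [h1, h2]
  have habsz1 : 0 < ‖1 + z‖ := by
    exact norm_pos_iff.mpr hz1
  have hcrux : 0 < (1+z).re * s.re + (1+z).im * s.im := by
    rw [hsre, hsim, ← Complex.norm_mul_cos_arg (1+z), ← Complex.norm_mul_sin_arg (1+z)]
    have hco : 0 < Real.cos ((1+z).arg - D.arg/2) := by
      apply Real.cos_pos_of_mem_Ioo
      have := abs_lt.mp hβδ
      constructor <;> [linarith; linarith]
    have expand : ‖1+z‖ * Real.cos ((1+z).arg) *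
          (Real.exp ((Complex.log D).re * (1/2)) * Real.cos (D.arg / 2))
        + ‖1+z‖ * Real.sin ((1+z).arg) *
          (Real.exp ((Complex.log D).re * (1/2)) * Real.sin (D.arg / 2))
        = ‖1+z‖ * Real.exp ((Complex.log D).re * (1/2)) *
            Real.cos ((1+z).arg - D.arg/2) := by
      rw [Real.cos_sub]
      ring
    rw [expand]
    positivity
  have hres : 0 < ((1+z)/s).re := by
    have hns : 0 < Complex.normSq s := Complex.normSq_pos.2 hs0
    have : ((1+z)/s).re = ((1+z).re * s.re + (1+z).im * s.im) / Complex.normSq s := by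
      rw [Complex.div_re]
      ring
    rw [this]
    exact div_pos hcrux hns
  have hgre : 0 < ((1+w)/(1-w)).re := by
    have hns : 0 < Complex.normSq (1-w) := Complex.normSq_pos.2 h1mw
    have hnw : Complex.normSq w < 1 := by
      rw [Complex.normSq_eq_norm_sq]; nlinarith [norm_nonneg w]
    have : ((1+w)/(1-w)).re = (1 - Complex.normSq w) / Complex.normSq (1-w) := by
      rw [Complex.div_re]
      simp [Complex.normSq_apply]
      ring
    rw [this]
    apply div_pos _ hns
    linarith
  -- algebra: (1+w)^2 * D = (z+1)^2 * (1-w)^2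
  have hgD : (1+w)^2 * D = (z+1)^2 * (1-w)^2 := by
    have hqG : q * ((1+w)^2 * D - (z+1)^2 * (1-w)^2) = 0 := by
      rw [hDdef]
      linear_combination (-(2*z*(1+w)^2)) * hqc + (-4 : ℂ) * heq2
    rcases mul_eq_zero.mp hqG with h | h
    · exact absurd h hq0
    · linear_combination h
  have hgfinal : (1+w)/(1-w) = (1+z)/s := by
    have hsq : ((1+w)/(1-w) - (1+z)/s) * ((1+w)/(1-w) + (1+z)/s) = 0 := by
      have hsq2 : ((1+w)/(1-w))^2 = ((1+z)/s)^2 := by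
        rw [div_pow, div_pow]
        rw [hs2]
        rw [div_eq_div_iff (pow_ne_zero 2 h1mw) hD0]
        linear_combination hgD
      linear_combination hsq2
    rcases mul_eq_zero.mp hsq with h | h
    · linear_combination h
    · exfalso
      have heq : (1+w)/(1-w) = -((1+z)/s) := by linear_combination h
      have := congrArg Complex.re heq
      rw [Complex.neg_re] at this
      linarith
  -- finish
  have hks : (1+w) * s = (1+z) * (1-w) := by
    rw [div_eq_div_iff h1mw hs0] at hgfinal
    linear_combination hgfinal
  have h2s : (2 : ℂ) * s ≠ 0 := by
    apply mul_ne_zero _ hs0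
    norm_num
  field_simp
  linear_combination hks
end

section
/- Let c ∈ (−1,1). For every z in the open unit disk 𝔻, the series ∑_{n≥1} (1/2)·(P_n(c) + P_{n−1}(c))·zⁿ converges and equals −1/2 + (z+1)/(2·√(1 − 2zc + z²)), where √ is the principal branch of the complex square root and P_n is the n-th Legendre polynomial. In particular, the n-th moment of the distribution μ_t of the monotone unitary Brownian motion at time t > 0 equals (1/2)·(P_n(2e^{−t/2}−1) + P_{n−1}(2e^{−t/2}−1)). -/
open Finset Complex FormalMultilinearSeries
open scoped NNReal ENNReal


/-- The `n`-th Legendre polynomial, `P_n(x) = 2^{-n} ∑_{k=0}^n (n choose k)² (x-1)^{n-k} (x+1)^k`. -/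
noncomputable def legendreP (n : ℕ) (x : ℝ) : ℝ :=
  (1 / 2 ^ n) * ∑ k ∈ Finset.range (n + 1),
    (n.choose k : ℝ) ^ 2 * (x - 1) ^ (n - k) * (x + 1) ^ k


noncomputable def legS (u v : ℝ) (n : ℕ) : ℝ :=
  ∑ k ∈ Finset.range (n+1), (n.choose k : ℝ)^2 * u^(n-k) * v^k


theorem key2 (n j : ℕ) (hj : j ≤ n) :
    ((n:ℝ)+2) * ((n+2).choose (j+2) : ℝ)^2 =
      (2*(n:ℝ)+3) * (((n+1).choose (j+2) : ℝ)^2 + ((n+1).choose (j+1) : ℝ)^2)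
      - ((n:ℝ)+1) * (((n).choose (j+2) : ℝ)^2 - 2*((n).choose (j+1) : ℝ)^2
          + ((n).choose j : ℝ)^2) := by
  obtain ⟨d, rfl⟩ : ∃ d, n = j + d := ⟨n - j, by omega⟩
  match d with
  | 0 =>
    simp [Nat.choose_self, Nat.choose_eq_zero_of_lt (show j < j+1 by omega),
      Nat.choose_eq_zero_of_lt (show j < j+2 by omega),
      Nat.choose_eq_zero_of_lt (show j+1 < j+2 by omega),
      Nat.choose_succ_self_right]
    push_cast; ring
  | 1 =>
    have a1 : (j+1+2).choose (j+2) = j+3 := by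
      rw [show j+1+2 = (j+2)+1 from rfl]; exact Nat.choose_succ_self_right _
    have a2 : (j+1+1).choose (j+2) = 1 := by
      rw [show j+1+1 = j+2 from rfl]; exact Nat.choose_self _
    have a3 : (j+1+1).choose (j+1) = j+2 := by
      rw [show j+1+1 = (j+1)+1 from rfl]; exact Nat.choose_succ_self_right _
    have a4 : (j+1).choose (j+2) = 0 := Nat.choose_eq_zero_of_lt (by omega)
    have a5 : (j+1).choose (j+1) = 1 := Nat.choose_self _
    have a6 : (j+1).choose j = j+1 := Nat.choose_succ_self_right _
    rw [a1, a2, a3, a4, a5, a6]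
    push_cast; ring
  | (e+2) =>
    rw [show j+(e+2) = j+e+2 from rfl] at *
    rw [show j+e+2+2 = j+e+4 from rfl, show j+e+2+1 = j+e+3 from rfl]
    push_cast
    have c1 := Nat.cast_choose ℝ (show j+2 ≤ j+e+4 by omega)
    have c2 := Nat.cast_choose ℝ (show j+2 ≤ j+e+3 by omega)
    have c3 := Nat.cast_choose ℝ (show j+1 ≤ j+e+3 by omega)
    have c4 := Nat.cast_choose ℝ (show j+2 ≤ j+e+2 by omega)
    have c5 := Nat.cast_choose ℝ (show j+1 ≤ j+e+2 by omega)
    have c6 := Nat.cast_choose ℝ (show j ≤ j+e+2 by omega)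
    rw [show j+e+4-(j+2) = e+2 by omega] at c1
    rw [show j+e+3-(j+2) = e+1 by omega] at c2
    rw [show j+e+3-(j+1) = e+2 by omega] at c3
    rw [show j+e+2-(j+2) = e by omega] at c4
    rw [show j+e+2-(j+1) = e+1 by omega] at c5
    rw [show j+e+2-j = e+2 by omega] at c6
    rw [c1, c2, c3, c4, c5, c6]
    have f1 : (Nat.factorial (j+e+4) : ℝ) = (j+e+4)*((j+e+3)*Nat.factorial (j+e+2)) := by
      rw [show j+e+4 = (j+e+3)+1 from rfl, Nat.factorial_succ,
          show j+e+3 = (j+e+2)+1 from rfl, Nat.factorial_succ]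
      push_cast; ring
    have f2 : (Nat.factorial (j+e+3) : ℝ) = (j+e+3)*Nat.factorial (j+e+2) := by
      rw [show j+e+3 = (j+e+2)+1 from rfl, Nat.factorial_succ]; push_cast; ring
    have f3 : (Nat.factorial (j+2) : ℝ) = (j+2)*((j+1)*Nat.factorial (j)) := by
      rw [show j+2 = (j+1)+1 from rfl, Nat.factorial_succ, Nat.factorial_succ]; push_cast; ring
    have f4 : (Nat.factorial (j+1) : ℝ) = (j+1)*Nat.factorial (j) := by rw [Nat.factorial_succ]; push_cast; ring
    have f5 : (Nat.factorial (e+2) : ℝ) = (e+2)*((e+1)*Nat.factorial (e)) := by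
      rw [show e+2 = (e+1)+1 from rfl, Nat.factorial_succ, Nat.factorial_succ]; push_cast; ring
    have f6 : (Nat.factorial (e+1) : ℝ) = (e+1)*Nat.factorial (e) := by rw [Nat.factorial_succ]; push_cast; ring
    rw [f1, f2, f3, f4, f5, f6]
    have hJ : (Nat.factorial (j) : ℝ) ≠ 0 := Nat.cast_ne_zero.mpr (Nat.factorial_ne_zero j)
    have hE : (Nat.factorial (e) : ℝ) ≠ 0 := Nat.cast_ne_zero.mpr (Nat.factorial_ne_zero e)
    have hF : (Nat.factorial (j+e+2) : ℝ) ≠ 0 := Nat.cast_ne_zero.mpr (Nat.factorial_ne_zero _)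
    have h1 : ((j:ℝ)+1) ≠ 0 := by positivity
    have h2 : ((j:ℝ)+2) ≠ 0 := by positivity
    have h3 : ((e:ℝ)+1) ≠ 0 := by positivity
    have h4 : ((e:ℝ)+2) ≠ 0 := by positivity
    field_simp
    ring

theorem S_rec (u v : ℝ) (n : ℕ) :
    ((n:ℝ)+2) * legS u v (n+2) =
      (2*(n:ℝ)+3) * ((u+v) * legS u v (n+1)) - ((n:ℝ)+1) * ((v-u)^2 * legS u v n) := by
  set fA : ℕ → ℝ := fun k => (((n+1).choose k : ℝ))^2 * u^(n+2-k) * v^k with hfA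
  set gB : ℕ → ℝ := fun k => if 1 ≤ k then (((n+1).choose (k-1) : ℝ))^2 * u^(n+2-k) * v^k else 0 with hgB
  set fC : ℕ → ℝ := fun k => ((n.choose k : ℝ))^2 * u^(n+2-k) * v^k with hfC
  set gD : ℕ → ℝ := fun k => if 1 ≤ k then ((n.choose (k-1) : ℝ))^2 * u^(n+2-k) * v^k else 0 with hgD
  set gE : ℕ → ℝ := fun k => if 2 ≤ k then ((n.choose (k-2) : ℝ))^2 * u^(n+2-k) * v^k else 0 with hgE
  have hA1 : ∑ k ∈ range (n+3), fA k = u * legS u v (n+1) := by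
    rw [Finset.sum_range_succ,
      show fA (n+2) = 0 by simp [hfA, Nat.choose_eq_zero_of_lt (show n+1 < n+2 by omega)],
      add_zero, legS, Finset.mul_sum]
    refine Finset.sum_congr rfl fun k hk => ?_
    have hk' : k ≤ n+1 := by simpa [Nat.lt_succ_iff] using hk
    simp only [hfA]
    rw [show n+2-k = (n+1-k)+1 by omega]; ring
  have hA2 : ∑ k ∈ range (n+3), gB k = v * legS u v (n+1) := by
    rw [Finset.sum_range_succ', hgB]
    simp only [show ¬(1:ℕ) ≤ 0 by omega, if_false, add_zero]
    simp only [show ∀ k:ℕ, 1 ≤ k+1 from fun k => by omega, if_true, Nat.add_sub_cancel]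
    rw [legS, Finset.mul_sum]
    refine Finset.sum_congr rfl fun k hk => ?_
    rw [show n+2-(k+1) = n+1-k by omega]; ring
  have hC1 : ∑ k ∈ range (n+3), fC k = u^2 * legS u v n := by
    rw [Finset.sum_range_succ, Finset.sum_range_succ,
      show fC (n+2) = 0 by simp [hfC, Nat.choose_eq_zero_of_lt (show n < n+2 by omega)],
      show fC (n+1) = 0 by simp [hfC, Nat.choose_eq_zero_of_lt (show n < n+1 by omega)],
      add_zero, add_zero, legS, Finset.mul_sum]
    refine Finset.sum_congr rfl fun k hk => ?_
    have hk' : k ≤ n := by simpa [Nat.lt_succ_iff] using hk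
    simp only [hfC]
    rw [show n+2-k = (n-k)+2 by omega]; ring
  have hD2 : ∑ k ∈ range (n+3), gD k = u * v * legS u v n := by
    rw [Finset.sum_range_succ', hgD]
    simp only [show ¬(1:ℕ) ≤ 0 by omega, if_false, add_zero]
    simp only [show ∀ k:ℕ, 1 ≤ k+1 from fun k => by omega, if_true, Nat.add_sub_cancel]
    rw [Finset.sum_range_succ,
      show ((n.choose (n+1) : ℝ))^2 * u^(n+2-(n+1+1)) * v^(n+1+1) = 0 by
        simp [Nat.choose_eq_zero_of_lt (show n < n+1 by omega)],
      add_zero, legS, Finset.mul_sum]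
    refine Finset.sum_congr rfl fun k hk => ?_
    have hk' : k ≤ n := by simpa [Nat.lt_succ_iff] using hk
    rw [show n+2-(k+1) = (n-k)+1 by omega]; ring
  have hE2 : ∑ k ∈ range (n+3), gE k = v^2 * legS u v n := by
    rw [Finset.sum_range_succ', Finset.sum_range_succ', hgE]
    simp only [show ¬(2:ℕ) ≤ 0 by omega, show ¬(2:ℕ) ≤ 0+1 by omega, if_false, add_zero]
    simp only [show ∀ k:ℕ, 2 ≤ k+1+1 from fun k => by omega, if_true,
      show ∀ k:ℕ, k+1+1-2 = k from fun k => by omega]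
    rw [legS, Finset.mul_sum]
    refine Finset.sum_congr rfl fun k hk => ?_
    rw [show n+2-(k+1+1) = n-k by omega]; ring
  have hRHS : (2*(n:ℝ)+3) * ((u+v) * legS u v (n+1)) - ((n:ℝ)+1) * ((v-u)^2 * legS u v n)
      = ∑ k ∈ range (n+3),
          ((2*(n:ℝ)+3) * (fA k + gB k) - ((n:ℝ)+1) * (fC k - 2 * gD k + gE k)) := by
    simp only [Finset.sum_sub_distrib, Finset.sum_add_distrib, ← Finset.mul_sum]
    rw [hA1, hA2, hC1, hD2, hE2]
    ring
  rw [hRHS, legS, Finset.mul_sum]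
  refine Finset.sum_congr rfl fun k hk => ?_
  have hk' : k ≤ n+2 := by simpa [Nat.lt_succ_iff] using hk
  match k with
  | 0 =>
    simp only [hfA, hgB, hfC, hgD, hgE, Nat.choose_zero_right,
      show ¬(1:ℕ) ≤ 0 by omega, show ¬(2:ℕ) ≤ 0 by omega, if_false]
    push_cast; ring
  | 1 =>
    simp only [hfA, hgB, hfC, hgD, hgE, Nat.choose_one_right,
      show (1:ℕ) ≤ 1 by omega, show ¬(2:ℕ) ≤ 1 by omega, if_true, if_false,
      show (1:ℕ)-1 = 0 from rfl, Nat.choose_zero_right]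
    push_cast; ring
  | (j+2) =>
    have hj : j ≤ n := by omega
    simp only [hfA, hgB, hfC, hgD, hgE,
      show (1:ℕ) ≤ j+2 by omega, show (2:ℕ) ≤ j+2 by omega, if_true,
      show j+2-1 = j+1 from rfl, show j+2-2 = j from rfl]
    linear_combination (u^(n+2-(j+2)) * v^(j+2)) * key2 n j hj

lemma legendreP_eq (n : ℕ) (x : ℝ) : legendreP n x = (1/2^n) * legS (x-1) (x+1) n := rfl

lemma legendreP_zero (x : ℝ) : legendreP 0 x = 1 := by simp [legendreP]

lemma legendreP_one (x : ℝ) : legendreP 1 x = x := by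
  simp [legendreP, Finset.sum_range_succ]; ring

lemma legendreP_rec (n : ℕ) (x : ℝ) :
    ((n:ℝ)+2) * legendreP (n+2) x =
      (2*(n:ℝ)+3) * x * legendreP (n+1) x - ((n:ℝ)+1) * legendreP n x := by
  have h := S_rec (x-1) (x+1) n
  simp only [legendreP_eq]
  have h2 : (x+1) - (x-1) = 2 := by ring
  have h3 : (x-1) + (x+1) = 2*x := by ring
  rw [h2, h3] at h
  have e2 : (2:ℝ)^(n+2) = 4 * 2^n := by ring
  have e1 : (2:ℝ)^(n+1) = 2 * 2^n := by ring
  have hp : (2:ℝ)^n ≠ 0 := by positivity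
  field_simp [e1, e2]
  linear_combination (2^n * 2^n * 2) * h

lemma ofScalars_coeff (a : ℕ → ℂ) (n : ℕ) :
    (FormalMultilinearSeries.ofScalars ℂ a).coeff n = a n := by
  show (FormalMultilinearSeries.ofScalars ℂ a) n (fun _ => 1) = a n
  rw [FormalMultilinearSeries.ofScalars_apply_eq]; simp

lemma hasFPowerSeriesAt_ofScalars {a : ℕ → ℂ} {g : ℂ → ℂ}
    (ha : ∀ z : ℂ, ‖z‖ < 1 → HasSum (fun n => a n * z ^ n) (g z)) :
    HasFPowerSeriesAt g (FormalMultilinearSeries.ofScalars ℂ a) 0 := by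
  rw [hasFPowerSeriesAt_iff]
  filter_upwards [Metric.ball_mem_nhds (0:ℂ) one_pos] with z hz
  have hz' : ‖z‖ < 1 := by simpa [Complex.dist_eq] using hz
  have := ha z hz'
  simp only [ofScalars_coeff, smul_eq_mul, zero_add]
  exact this.congr_fun fun n => by ring

lemma coeff_unique {a b : ℕ → ℂ} {g : ℂ → ℂ}
    (ha : ∀ z : ℂ, ‖z‖ < 1 → HasSum (fun n => a n * z ^ n) (g z))
    (hb : ∀ z : ℂ, ‖z‖ < 1 → HasSum (fun n => b n * z ^ n) (g z)) :
    a = b := by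
  have h := (hasFPowerSeriesAt_ofScalars ha).eq_formalMultilinearSeries
    (hasFPowerSeriesAt_ofScalars hb)
  funext n
  rw [← ofScalars_coeff a n, ← ofScalars_coeff b n, h]

-- shifting helper
lemma hasSum_shift {w : ℕ → ℂ} {z T : ℂ} (h : HasSum (fun n => w n * z ^ (n+1)) T) :
    HasSum (fun n => (if 1 ≤ n then w (n-1) else 0) * z ^ n) T := by
  have h1 : HasSum (fun n : ℕ => (if 1 ≤ n+1 then w (n+1-1) else 0) * z ^ (n+1)) T := by
    simpa using h
  have h2 := (hasSum_nat_add_iff (f := fun n => (if 1 ≤ n then w (n-1) else 0) * z ^ n) 1).mp h1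
  simpa using h2

lemma q_slit {c : ℝ} (hc1 : -1 < c) (hc2 : c < 1) {z : ℂ} (hz : ‖z‖ < 1) :
    1 - 2 * z * (c:ℂ) + z ^ 2 ∈ Complex.slitPlane := by
  have habs : z.re^2 + z.im^2 < 1 := by
    have h1 : ‖z‖ ^ 2 < 1 := by
      have := norm_nonneg z
      nlinarith
    rwa [Complex.sq_norm, Complex.normSq_apply, ← pow_two, ← pow_two] at h1
  rw [Complex.mem_slitPlane_iff]
  have hre : (1 - 2 * z * (c:ℂ) + z ^ 2).re = 1 - 2 * z.re * c + z.re^2 - z.im^2 := by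
    simp [Complex.add_re, Complex.sub_re, Complex.mul_re, Complex.ofReal_re,
      Complex.ofReal_im, pow_two]
    ring
  have him : (1 - 2 * z * (c:ℂ) + z ^ 2).im = 2 * z.im * (z.re - c) := by
    simp [Complex.add_im, Complex.sub_im, Complex.mul_im, Complex.ofReal_re,
      Complex.ofReal_im, pow_two]
    ring
  by_cases hy : z.im = 0
  · left
    rw [hre]
    nlinarith [sq_nonneg (z.re - c), sq_nonneg z.im]
  · by_cases hx : z.re = c
    · left
      rw [hre, hx]
      nlinarith
    · right
      rw [him]
      intro hcon
      rcases mul_eq_zero.mp hcon with h | h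
      · rcases mul_eq_zero.mp h with h' | h'
        · norm_num at h'
        · exact hy h'
      · exact hx (by linarith [sub_eq_zero.mp h])

lemma q_ne_zero {c : ℝ} (hc1 : -1 < c) (hc2 : c < 1) {z : ℂ} (hz : ‖z‖ < 1) :
    1 - 2 * z * (c:ℂ) + z ^ 2 ≠ 0 :=
  Complex.slitPlane_ne_zero (q_slit hc1 hc2 hz)

lemma q_hasDerivAt (c : ℝ) (z : ℂ) :
    HasDerivAt (fun w : ℂ => 1 - 2 * w * (c:ℂ) + w ^ 2) (2 * z - 2 * c) z := by
  have h1 : HasDerivAt (fun w : ℂ => 1 - 2 * w * (c:ℂ) + w ^ 2)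
      (0 - 2 * 1 * (c:ℂ) + 2 * z ^ 1) z := by
    exact ((hasDerivAt_const z (1:ℂ)).sub
      (((hasDerivAt_id z).const_mul (2:ℂ)).mul_const _)).add (hasDerivAt_pow 2 z)
  convert h1 using 1
  ring

lemma f_hasDerivAt {c : ℝ} (hc1 : -1 < c) (hc2 : c < 1) {z : ℂ} (hz : ‖z‖ < 1) :
    HasDerivAt (fun w : ℂ => (1 - 2 * w * (c:ℂ) + w ^ 2) ^ (-(1/2) : ℂ))
      (((c:ℂ) - z) * (1 - 2 * z * (c:ℂ) + z ^ 2) ^ (-(3/2) : ℂ)) z := by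
  have h := (q_hasDerivAt c z).cpow_const (c := (-(1/2) : ℂ)) (q_slit hc1 hc2 hz)
  convert h using 1
  rw [show (-(1/2) : ℂ) - 1 = -(3/2) by ring]
  ring

noncomputable def fc (c : ℝ) : ℂ → ℂ := fun z => (1 - 2*z*(c:ℂ) + z^2) ^ (-(1/2):ℂ)

noncomputable def acoef (c : ℝ) (n : ℕ) : ℂ := (cauchyPowerSeries (fc c) 0 (1/2)).coeff n

lemma mem_eball {z : ℂ} {r : ℝ≥0} (hz : ‖z‖ < r) :
    z ∈ Metric.eball (0:ℂ) (r : ℝ≥0∞) := by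
  rw [Metric.mem_eball, edist_zero_right]
  have h1 : ‖z‖₊ < r := by
    rw [← NNReal.coe_lt_coe, coe_nnnorm]
    exact hz
  exact_mod_cast h1

lemma fc_ball_series {c : ℝ} (hc1 : -1 < c) (hc2 : c < 1) {r : ℝ≥0} (hr0 : 0 < r)
    (hr : (r:ℝ) < 1) :
    HasFPowerSeriesOnBall (fc c) (cauchyPowerSeries (fc c) 0 r) 0 r := by
  apply DifferentiableOn.hasFPowerSeriesOnBall _ hr0
  intro z hz
  have hz' : ‖z‖ < 1 := by
    rw [Metric.mem_closedBall, Complex.dist_eq, sub_zero] at hz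
    linarith
  exact (f_hasDerivAt hc1 hc2 hz').differentiableAt.differentiableWithinAt

lemma exists_r {z : ℂ} (hz : ‖z‖ < 1) :
    ∃ r : ℝ≥0, 0 < r ∧ ‖z‖ < r ∧ (r:ℝ) < 1 := by
  refine ⟨⟨(‖z‖ + 1)/2, by positivity⟩, ?_, ?_, ?_⟩
  · exact NNReal.coe_pos.mp (show (0:ℝ) < (‖z‖ + 1)/2 by positivity)
  · show ‖z‖ < (‖z‖ + 1)/2
    linarith
  · show (‖z‖ + 1)/2 < (1:ℝ)
    linarith

lemma fc_r_series {c : ℝ} (hc1 : -1 < c) (hc2 : c < 1) {r : ℝ≥0} (hr0 : 0 < r)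
    (hr : (r:ℝ) < 1) :
    HasFPowerSeriesOnBall (fc c) (cauchyPowerSeries (fc c) 0 (1/2)) 0 r := by
  have h1 := fc_ball_series hc1 hc2 hr0 hr
  have h2 := fc_ball_series hc1 hc2 (r := 1/2) (by norm_num) (by norm_num)
  have := h1.hasFPowerSeriesAt.eq_formalMultilinearSeries h2.hasFPowerSeriesAt
  rwa [this] at h1

lemma acoef_hasSum {c : ℝ} (hc1 : -1 < c) (hc2 : c < 1) {z : ℂ} (hz : ‖z‖ < 1) :
    HasSum (fun n => acoef c n * z ^ n) (fc c z) := by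
  obtain ⟨r, hr0, hzr, hr1⟩ := exists_r hz
  have h := (fc_r_series hc1 hc2 hr0 hr1).hasSum (mem_eball hzr)
  simp only [apply_eq_pow_smul_coeff, smul_eq_mul, zero_add] at h
  exact h.congr_fun fun n => by rw [mul_comm]; rfl

lemma acoef_deriv_hasSum {c : ℝ} (hc1 : -1 < c) (hc2 : c < 1) {z : ℂ} (hz : ‖z‖ < 1) :
    HasSum (fun n : ℕ => ((n:ℂ)+1) * acoef c (n+1) * z ^ (n+1))
      (z * (((c:ℂ) - z) * (1 - 2 * z * (c:ℂ) + z ^ 2) ^ (-(3/2) : ℂ))) := by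
  obtain ⟨r, hr0, hzr, hr1⟩ := exists_r hz
  have hd := (fc_r_series hc1 hc2 hr0 hr1).fderiv
  have h := (hd.hasSum (mem_eball hzr)).mapL (ContinuousLinearMap.apply ℂ ℂ z)
  have hterm : ∀ n : ℕ, (ContinuousLinearMap.apply ℂ ℂ z)
      ((cauchyPowerSeries (fc c) 0 (1/2)).derivSeries n (fun _ => z))
      = ((n:ℂ)+1) * acoef c (n+1) * z ^ (n+1) := by
    intro n
    rw [ContinuousLinearMap.apply_apply, derivSeries_apply_diag, apply_eq_pow_smul_coeff]
    simp only [nsmul_eq_mul, smul_eq_mul]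
    push_cast
    rw [acoef]; ring
  have hval : (fderiv ℂ (fc c) (0 + z)) z
      = z * (((c:ℂ) - z) * (1 - 2 * z * (c:ℂ) + z ^ 2) ^ (-(3/2) : ℂ)) := by
    rw [zero_add]
    have hder := f_hasDerivAt hc1 hc2 hz
    have hf : fderiv ℂ (fc c) z = ContinuousLinearMap.smulRight (1 : ℂ →L[ℂ] ℂ)
        (((c:ℂ) - z) * (1 - 2 * z * (c:ℂ) + z ^ 2) ^ (-(3/2) : ℂ)) :=
      hder.hasFDerivAt.fderiv
    rw [hf]
    simp [mul_comm]
  rw [ContinuousLinearMap.apply_apply, hval] at h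
  exact h.congr_fun fun n => (hterm n).symm

lemma acoef_zero {c : ℝ} (hc1 : -1 < c) (hc2 : c < 1) : acoef c 0 = 1 := by
  have h := acoef_hasSum hc1 hc2 (z := 0) (by simp)
  have h2 : HasSum (fun n : ℕ => acoef c n * (0:ℂ) ^ n) (acoef c 0) := by
    have := hasSum_single (f := fun n : ℕ => acoef c n * (0:ℂ) ^ n) 0
      (fun b hb => by simp [zero_pow hb])
    simpa using this
  have hf : fc c 0 = 1 := by
    simp [fc]
  rw [hf] at h
  exact h2.unique h

set_option maxHeartbeats 1000000 in
lemma abstract_recurrence {c : ℝ} (hc1 : -1 < c) (hc2 : c < 1) (a : ℕ → ℂ)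
    (hsum : ∀ z : ℂ, ‖z‖ < 1 → HasSum (fun n => a n * z ^ n) (fc c z))
    (hder : ∀ z : ℂ, ‖z‖ < 1 → HasSum (fun n : ℕ => ((n:ℂ)+1) * a (n+1) * z ^ (n+1))
      (z * (((c:ℂ) - z) * (1 - 2 * z * (c:ℂ) + z ^ 2) ^ (-(3/2) : ℂ))))
    (h0 : a 0 = 1) :
    a 1 = (c:ℂ) ∧ ∀ n : ℕ, ((n:ℂ)+2) * a (n+2)
      = (2*(n:ℂ)+3) * (c:ℂ) * a (n+1) - ((n:ℂ)+1) * a n := by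
  set u : ℕ → ℂ := fun n => (n:ℂ) * a n with hu
  set Lc : ℕ → ℂ := fun n => u n - 2*(c:ℂ)*(if 1 ≤ n then u (n-1) else 0)
      + (if 1 ≤ n then (if 1 ≤ n-1 then u (n-1-1) else 0) else 0) with hLc
  set Rc : ℕ → ℂ := fun n => (c:ℂ)*(if 1 ≤ n then a (n-1) else 0)
      - (if 1 ≤ n then (if 1 ≤ n-1 then a (n-1-1) else 0) else 0) with hRc
  set g : ℂ → ℂ := fun z => (1 - 2*z*(c:ℂ) + z^2) * z *
      (((c:ℂ) - z) * (1 - 2 * z * (c:ℂ) + z ^ 2) ^ (-(3/2) : ℂ)) with hg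
  have hL : ∀ z : ℂ, ‖z‖ < 1 → HasSum (fun n => Lc n * z ^ n) (g z) := by
    intro z hz
    have hD := hder z hz
    set D : ℂ := ((c:ℂ) - z) * (1 - 2 * z * (c:ℂ) + z ^ 2) ^ (-(3/2) : ℂ) with hDdef
    have S1 : HasSum (fun n => u n * z ^ n) (z * D) := by
      have h1 : HasSum (fun n : ℕ => u (n+1) * z ^ (n+1)) (z * D) :=
        hD.congr_fun fun n => by rw [hu]; push_cast; ring
      have h2 := (hasSum_nat_add_iff (f := fun n => u n * z ^ n) 1).mp h1
      simpa [hu] using h2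
    have S1' : HasSum (fun n => u n * z ^ (n+1)) (z * (z * D)) :=
      (S1.mul_left z).congr_fun fun n => by ring
    have S2 : HasSum (fun n => (if 1 ≤ n then u (n-1) else 0) * z ^ n) (z * (z * D)) :=
      hasSum_shift S1'
    have S2' : HasSum (fun n => (if 1 ≤ n then u (n-1) else 0) * z ^ (n+1))
        (z * (z * (z * D))) := (S2.mul_left z).congr_fun fun n => by ring
    have S3 : HasSum (fun n => (if 1 ≤ n then (if 1 ≤ n-1 then u (n-1-1) else 0) else 0) * z ^ n)
        (z * (z * (z * D))) := hasSum_shift (w := fun m => if 1 ≤ m then u (m-1) else 0) S2'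
    have := (S1.sub (S2.mul_left (2*(c:ℂ)))).add S3
    have heq : z * D - 2*(c:ℂ) * (z * (z * D)) + z * (z * (z * D)) = g z := by
      rw [hg, hDdef]; ring
    rw [heq] at this
    exact this.congr_fun fun n => by rw [hLc]; ring
  have hR : ∀ z : ℂ, ‖z‖ < 1 → HasSum (fun n => Rc n * z ^ n) (g z) := by
    intro z hz
    have hF := hsum z hz
    set F : ℂ := fc c z with hFdef
    have R1' : HasSum (fun n => a n * z ^ (n+1)) (z * F) :=
      (hF.mul_left z).congr_fun fun n => by ring
    have R1 : HasSum (fun n => (if 1 ≤ n then a (n-1) else 0) * z ^ n) (z * F) :=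
      hasSum_shift R1'
    have R2' : HasSum (fun n => (if 1 ≤ n then a (n-1) else 0) * z ^ (n+1)) (z * (z * F)) :=
      (R1.mul_left z).congr_fun fun n => by ring
    have R2 : HasSum (fun n => (if 1 ≤ n then (if 1 ≤ n-1 then a (n-1-1) else 0) else 0) * z ^ n)
        (z * (z * F)) := hasSum_shift (w := fun m => if 1 ≤ m then a (m-1) else 0) R2'
    have hcomb := (R1.mul_left (c:ℂ)).sub R2
    have hq0 := q_ne_zero hc1 hc2 hz
    have hqpow : (1 - 2*z*(c:ℂ) + z^2) * (1 - 2*z*(c:ℂ) + z^2) ^ (-(3/2) : ℂ)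
        = (1 - 2*z*(c:ℂ) + z^2) ^ (-(1/2) : ℂ) := by
      have h := Complex.cpow_add (x := 1 - 2*z*(c:ℂ) + z^2) 1 (-(3/2)) hq0
      rw [Complex.cpow_one, show (1:ℂ) + (-(3/2)) = -(1/2) by norm_num] at h
      exact h.symm
    have heq : (c:ℂ) * (z * F) - z * (z * F) = g z := by
      rw [hg, hFdef, fc]
      calc (c:ℂ) * (z * ((1 - 2*z*(c:ℂ) + z^2) ^ (-(1/2):ℂ)))
            - z * (z * ((1 - 2*z*(c:ℂ) + z^2) ^ (-(1/2):ℂ)))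
          = z * ((c:ℂ) - z) * ((1 - 2*z*(c:ℂ) + z^2) ^ (-(1/2):ℂ)) := by ring
        _ = z * ((c:ℂ) - z) * ((1 - 2*z*(c:ℂ) + z^2) * (1 - 2*z*(c:ℂ) + z^2) ^ (-(3/2) : ℂ)) := by
            rw [hqpow]
        _ = (1 - 2*z*(c:ℂ) + z^2) * z * (((c:ℂ) - z) * (1 - 2*z*(c:ℂ) + z^2) ^ (-(3/2) : ℂ)) := by
            ring
    rw [heq] at hcomb
    exact hcomb.congr_fun fun n => by rw [hRc]; ring
  have huniq := coeff_unique hL hR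
  constructor
  · have h1 := congrFun huniq 1
    rw [hLc, hRc] at h1
    simp only [show (1:ℕ)-1 = 0 from rfl, show ¬ (1:ℕ) ≤ 0 by omega, if_false, if_true,
      le_refl] at h1
    rw [hu] at h1
    simp only [Nat.cast_one, Nat.cast_zero, one_mul, zero_mul, mul_zero, sub_zero, add_zero] at h1
    rw [h1, h0, mul_one]
  · intro n
    have h2 := congrFun huniq (n+2)
    rw [hLc, hRc] at h2
    simp only [show (1:ℕ) ≤ n+2 by omega, show n+2-1 = n+1 from rfl,
      show (1:ℕ) ≤ n+1 by omega, show n+1-1 = n from rfl, if_true] at h2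
    rw [hu] at h2
    push_cast at h2
    linear_combination h2

lemma acoef_eq_legendre {c : ℝ} (hc1 : -1 < c) (hc2 : c < 1) (n : ℕ) :
    acoef c n = ((legendreP n c : ℝ) : ℂ) := by
  obtain ⟨h1, hrec⟩ := abstract_recurrence hc1 hc2 (acoef c)
    (fun z hz => acoef_hasSum hc1 hc2 hz)
    (fun z hz => acoef_deriv_hasSum hc1 hc2 hz) (acoef_zero hc1 hc2)
  have key : ∀ n : ℕ, acoef c n = ((legendreP n c : ℝ) : ℂ)
      ∧ acoef c (n+1) = ((legendreP (n+1) c : ℝ) : ℂ) := by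
    intro n
    induction n with
    | zero =>
      constructor
      · rw [acoef_zero hc1 hc2, legendreP_zero]; norm_num
      · rw [h1, legendreP_one]
    | succ m ih =>
      refine ⟨ih.2, ?_⟩
      have hr := hrec m
      have hpr := legendreP_rec m c
      have hne : ((m:ℂ)+2) ≠ 0 := by
        have : ((m+2 : ℕ) : ℂ) ≠ 0 := Nat.cast_ne_zero.mpr (by omega)
        push_cast at this
        convert this using 1
      show acoef c (m+2) = ((legendreP (m+2) c : ℝ) : ℂ)
      apply mul_left_cancel₀ hne
      rw [hr, ih.1, ih.2]
      have hC := congrArg (fun x : ℝ => (x : ℂ)) hpr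
      push_cast at hC ⊢
      linear_combination -hC
  exact (key n).1

lemma legendre_hasSum {c : ℝ} (hc1 : -1 < c) (hc2 : c < 1) {z : ℂ}
    (hz : ‖z‖ < 1) :
    HasSum (fun n => ((legendreP n c : ℝ) : ℂ) * z ^ n)
      ((1 - 2 * z * (c:ℂ) + z ^ 2) ^ (-(1/2) : ℂ)) :=
  (acoef_hasSum hc1 hc2 hz).congr_fun fun n => by rw [acoef_eq_legendre hc1 hc2]

theorem part1 (c : ℝ) (hc : c ∈ Set.Ioo (-1 : ℝ) 1) (z : ℂ) (hz : ‖z‖ < 1) :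
    HasSum (fun n : ℕ =>
        ((1 / 2 * (legendreP (n + 1) c + legendreP n c) : ℝ) : ℂ) * z ^ (n + 1))
      (-(1 / 2) + (z + 1) / (2 * ((1 - 2 * z * (c : ℂ) + z ^ 2) ^ (1 / 2 : ℂ)))) := by
  obtain ⟨hc1, hc2⟩ := hc
  have G := legendre_hasSum hc1 hc2 hz
  set F : ℂ := (1 - 2 * z * (c:ℂ) + z ^ 2) ^ (-(1/2) : ℂ) with hF
  have h1 : HasSum (fun n : ℕ => ((legendreP (n+1) c : ℝ) : ℂ) * z ^ (n+1)) (F - 1) := by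
    refine (hasSum_nat_add_iff (f := fun n => ((legendreP n c : ℝ) : ℂ) * z ^ n) 1).mpr ?_
    have : F - 1 + ∑ i ∈ range 1, ((legendreP i c : ℝ) : ℂ) * z ^ i = F := by
      simp [legendreP_zero]
    rw [this]
    exact G
  have h2 : HasSum (fun n : ℕ => ((legendreP n c : ℝ) : ℂ) * z ^ (n+1)) (z * F) :=
    (G.mul_left z).congr_fun fun n => by ring
  have h3 := (h1.add h2).mul_left (1/2 : ℂ)
  have hval : (1/2 : ℂ) * ((F - 1) + z * F)
      = -(1 / 2) + (z + 1) / (2 * ((1 - 2 * z * (c : ℂ) + z ^ 2) ^ (1 / 2 : ℂ))) := by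
    have hq0 := q_ne_zero hc1 hc2 hz
    have hpow : F = ((1 - 2 * z * (c:ℂ) + z ^ 2) ^ (1/2 : ℂ))⁻¹ := by
      rw [hF, show (-(1/2) : ℂ) = -(1/2 : ℂ) from rfl, Complex.cpow_neg]
    have hne : (1 - 2 * z * (c:ℂ) + z ^ 2) ^ (1/2 : ℂ) ≠ 0 := by
      simp only [ne_eq, Complex.cpow_eq_zero_iff, not_and_or]
      left; exact hq0
    rw [hpow]
    field_simp
    ring
  rw [hval] at h3
  exact h3.congr_fun fun n => by push_cast; ring

theorem part2 (t : ℝ) (ht : 0 < t) (m : ℕ → ℂ)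
    (hm : ∀ z : ℂ, ‖z‖ < 1 →
      HasSum (fun n : ℕ => m (n + 1) * z ^ (n + 1))
        (-(1 / 2) + (z + 1) /
          (2 * ((1 - 2 * z * ((2 * Real.exp (-t / 2) - 1 : ℝ) : ℂ) + z ^ 2) ^ (1 / 2 : ℂ))))) :
    ∀ n : ℕ, 1 ≤ n →
      m n = ((1 / 2 * (legendreP n (2 * Real.exp (-t / 2) - 1)
        + legendreP (n - 1) (2 * Real.exp (-t / 2) - 1)) : ℝ) : ℂ) := by
  set c₀ : ℝ := 2 * Real.exp (-t / 2) - 1 with hc₀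
  have hmem : c₀ ∈ Set.Ioo (-1 : ℝ) 1 := by
    constructor
    · have := Real.exp_pos (-t / 2)
      rw [hc₀]; linarith
    · have h1 : Real.exp (-t / 2) < Real.exp 0 := Real.exp_lt_exp.mpr (by linarith)
      rw [Real.exp_zero] at h1
      rw [hc₀]; linarith
  set g : ℂ → ℂ := fun z => -(1 / 2) + (z + 1) /
      (2 * ((1 - 2 * z * (c₀ : ℂ) + z ^ 2) ^ (1 / 2 : ℂ))) with hg
  have ha : ∀ z : ℂ, ‖z‖ < 1 →
      HasSum (fun n => (if 1 ≤ n then m (n-1+1) else 0) * z ^ n) (g z) := by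
    intro z hz
    exact hasSum_shift (w := fun n => m (n+1)) (hm z hz)
  have hb : ∀ z : ℂ, ‖z‖ < 1 →
      HasSum (fun n => (if 1 ≤ n then
        ((1 / 2 * (legendreP (n-1+1) c₀ + legendreP (n-1) c₀) : ℝ) : ℂ) else 0) * z ^ n)
        (g z) := by
    intro z hz
    exact hasSum_shift
      (w := fun n => ((1 / 2 * (legendreP (n+1) c₀ + legendreP n c₀) : ℝ) : ℂ))
      (part1 c₀ hmem z hz)
  have huniq := coeff_unique ha hb
  intro n hn
  obtain ⟨k, rfl⟩ : ∃ k, n = k + 1 := ⟨n - 1, by omega⟩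
  have h := congrFun huniq (k+1)
  simp only [show (1:ℕ) ≤ k+1 by omega, if_true, show k+1-1 = k from rfl] at h
  exact h

/-- For `c ∈ (-1,1)` and `z ∈ 𝔻`, the series `∑_{n≥1} (1/2)(P_n(c)+P_{n-1}(c)) zⁿ`
converges to `-1/2 + (z+1)/(2√(1-2zc+z²))` (principal complex square root).
In particular the `n`-th moment of the distribution `μ_t` of the monotone unitary
Brownian motion equals `(1/2)(P_n(2e^{-t/2}-1)+P_{n-1}(2e^{-t/2}-1))`. -/
theorem stmt_5 :
    (∀ c : ℝ, c ∈ Set.Ioo (-1 : ℝ) 1 → ∀ z : ℂ, ‖z‖ < 1 →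
      HasSum (fun n : ℕ =>
          ((1 / 2 * (legendreP (n + 1) c + legendreP n c) : ℝ) : ℂ) * z ^ (n + 1))
        (-(1 / 2) + (z + 1) / (2 * ((1 - 2 * z * (c : ℂ) + z ^ 2) ^ (1 / 2 : ℂ))))) ∧
    (∀ t : ℝ, 0 < t → ∀ m : ℕ → ℂ,
      (∀ z : ℂ, ‖z‖ < 1 →
        HasSum (fun n : ℕ => m (n + 1) * z ^ (n + 1))
          (-(1 / 2) + (z + 1) /
            (2 * ((1 - 2 * z * ((2 * Real.exp (-t / 2) - 1 : ℝ) : ℂ) + z ^ 2) ^ (1 / 2 : ℂ))))) →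
      ∀ n : ℕ, 1 ≤ n →
        m n = ((1 / 2 * (legendreP n (2 * Real.exp (-t / 2) - 1)
          + legendreP (n - 1) (2 * Real.exp (-t / 2) - 1)) : ℝ) : ℂ)) :=
  ⟨fun c hc z hz => part1 c hc z hz, fun t ht m hm => part2 t ht m hm⟩
end

section
/- Let c ∈ (−1,1) and θ ∈ (−π,π) with cos θ > c. Then the real part of (e^{iθ}+1)/√(1 − 2e^{iθ}c + e^{2iθ}) equals √2·cos(θ/2)/√(cos θ − c), where in the numerator √ denotes the principal branch of the complex square root and on the right-hand side the real square root of the positive number cos θ − c. -/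
/-- For `c ∈ (-1,1)` and `θ ∈ (-π,π)` with `cos θ > c`, the real part of
`(e^{iθ}+1)/√(1 - 2e^{iθ}c + e^{2iθ})` (principal complex square root) equals
`√2·cos(θ/2)/√(cos θ - c)` (real square root). -/
theorem stmt_6 (c : ℝ) (hc : c ∈ Set.Ioo (-1 : ℝ) 1) (θ : ℝ)
    (hθ : θ ∈ Set.Ioo (-Real.pi) Real.pi) (hcos : c < Real.cos θ) :
    ((Complex.exp (θ * Complex.I) + 1) /
        ((1 - 2 * Complex.exp (θ * Complex.I) * (c : ℂ)
          + Complex.exp (θ * Complex.I) ^ 2) ^ (1 / 2 : ℂ))).re =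
      Real.sqrt 2 * Real.cos (θ / 2) / Real.sqrt (Real.cos θ - c) := by
  obtain ⟨hθ1, hθ2⟩ := hθ
  set r : ℝ := 2 * (Real.cos θ - c) with hr_def
  have hr : 0 < r := by simp only [hr_def]; nlinarith
  set w : ℂ := (Real.log r : ℂ) + θ * Complex.I with hw_def
  have hexpw : Complex.exp w = (r : ℂ) * Complex.exp (θ * Complex.I) := by
    rw [hw_def, Complex.exp_add, ← Complex.ofReal_exp, Real.exp_log hr]
  have hz : (1 : ℂ) - 2 * Complex.exp (θ * Complex.I) * (c : ℂ)
      + Complex.exp (θ * Complex.I) ^ 2 = Complex.exp w := by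
    rw [hexpw]
    have h2cos : 2 * Complex.cos (θ : ℂ) =
        Complex.exp ((θ:ℂ) * Complex.I) + Complex.exp (-(θ:ℂ) * Complex.I) :=
      Complex.two_cos _
    have h1 : Complex.exp ((θ:ℂ) * Complex.I) * Complex.exp (-(θ:ℂ) * Complex.I) = 1 := by
      rw [← Complex.exp_add]; ring_nf; exact Complex.exp_zero
    have hrc : ((r : ℂ)) = 2 * Complex.cos (θ:ℂ) - 2 * (c:ℂ) := by
      rw [hr_def]; push_cast [Complex.ofReal_cos]; ring
    rw [hrc, h2cos]
    linear_combination -h1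
  -- compute the square root
  have hsqrt : ((1 : ℂ) - 2 * Complex.exp (θ * Complex.I) * (c : ℂ)
      + Complex.exp (θ * Complex.I) ^ 2) ^ (1 / 2 : ℂ)
      = (Real.sqrt r : ℂ) * Complex.exp ((θ / 2 : ℝ) * Complex.I) := by
    rw [hz, Complex.cpow_def_of_ne_zero (Complex.exp_ne_zero w),
      Complex.log_exp (by simp [hw_def]; exact hθ1) (by simp [hw_def]; exact hθ2.le),
      hw_def]
    have : ((Real.log r : ℂ) + θ * Complex.I) * (1 / 2)
        = (Real.log r / 2 : ℝ) + (θ / 2 : ℝ) * Complex.I := by push_cast; ring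
    rw [this, Complex.exp_add, ← Complex.ofReal_exp]
    congr 2
    · rw [Real.sqrt_eq_rpow, Real.rpow_def_of_pos hr]; ring_nf
  rw [hsqrt]
  -- numerator
  have hnum : Complex.exp (θ * Complex.I) + 1
      = Complex.exp ((θ / 2 : ℝ) * Complex.I) * (2 * Real.cos (θ / 2) : ℝ) := by
    have h2cos : 2 * Complex.cos ((θ/2 : ℝ) : ℂ) =
        Complex.exp (((θ/2:ℝ):ℂ) * Complex.I) + Complex.exp (-((θ/2:ℝ):ℂ) * Complex.I) :=
      Complex.two_cos _
    have h1 : Complex.exp (((θ/2:ℝ):ℂ) * Complex.I) * Complex.exp (((θ/2:ℝ):ℂ) * Complex.I)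
        = Complex.exp ((θ:ℂ) * Complex.I) := by
      rw [← Complex.exp_add]; congr 1; push_cast; ring
    have h0 : Complex.exp (((θ/2:ℝ):ℂ) * Complex.I) * Complex.exp (-((θ/2:ℝ):ℂ) * Complex.I)
        = 1 := by
      rw [← Complex.exp_add]; ring_nf; exact Complex.exp_zero
    rw [Complex.ofReal_mul, Complex.ofReal_cos, Complex.ofReal_ofNat]
    linear_combination -h1 - Complex.exp (((θ/2:ℝ):ℂ) * Complex.I) * h2cos - h0
  rw [hnum]
  have hexne : Complex.exp ((θ / 2 : ℝ) * Complex.I) ≠ 0 := Complex.exp_ne_zero _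
  have hsr : Real.sqrt r ≠ 0 := by positivity
  rw [mul_comm ((Real.sqrt r : ℂ)) _, mul_div_mul_left _ _ hexne]
  rw [show ((2 * Real.cos (θ/2) : ℝ) : ℂ) / (Real.sqrt r : ℂ)
      = ((2 * Real.cos (θ/2) / Real.sqrt r : ℝ) : ℂ) by push_cast; ring]
  rw [Complex.ofReal_re]
  -- real arithmetic
  have hx : (0:ℝ) < Real.cos θ - c := by linarith
  rw [hr_def, Real.sqrt_mul (by norm_num) ]
  have h2 : Real.sqrt 2 ≠ 0 := by positivity
  have hxx : Real.sqrt (Real.cos θ - c) ≠ 0 := by positivity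
  rw [div_eq_div_iff (by positivity) (by positivity)]
  have h22 : Real.sqrt 2 * Real.sqrt 2 = 2 := Real.mul_self_sqrt (by norm_num)
  linear_combination (-(Real.cos (θ/2) * Real.sqrt (Real.cos θ - c))) * h22
end

section
/- Let c ∈ (−1,1). Then (1/(2π)) ∫_{−π}^{π} √2·cos(θ/2)/√(cos θ − c) · 1_{{cos θ > c}} dθ = 1; that is, the function θ ↦ √2 cos(θ/2)/√(cos θ − c) on {θ ∈ (−π,π) : cos θ > c} (extended by 0 elsewhere) is a probability density with respect to the normalized Lebesgue measure dθ/(2π) on (−π,π). -/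
open Real Set intervalIntegral MeasureTheory

/-- For `c ∈ (-1,1)`, the function `θ ↦ √2 cos(θ/2)/√(cos θ - c)` on
`{θ ∈ (-π,π) : cos θ > c}` (extended by `0` elsewhere) is a probability density with
respect to the normalized Lebesgue measure `dθ/(2π)` on `(-π,π)`. -/
theorem stmt_7 (c : ℝ) (hc : c ∈ Set.Ioo (-1 : ℝ) 1) :
    (1 / (2 * Real.pi)) * ∫ θ in (-Real.pi)..Real.pi,
      (if c < Real.cos θ then
        Real.sqrt 2 * Real.cos (θ / 2) / Real.sqrt (Real.cos θ - c) else 0) = 1 := by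
  obtain ⟨hc1, hc2⟩ := hc
  set f : ℝ → ℝ := fun θ =>
    if c < Real.cos θ then Real.sqrt 2 * Real.cos (θ / 2) / Real.sqrt (Real.cos θ - c) else 0
    with hf
  set α := Real.arccos c with hα
  have hα0 : 0 < α := Real.arccos_pos.2 hc2
  have hαπ : α < π := lt_of_le_of_ne (Real.arccos_le_pi c)
    (fun h => absurd (Real.arccos_eq_pi.1 h) (by linarith))
  have hcα : Real.cos α = c := Real.cos_arccos hc1.le hc2.le
  set a := Real.sqrt ((1 - c) / 2) with ha
  have ha0 : 0 < a := Real.sqrt_pos.2 (by linarith)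
  have ha2 : a ^ 2 = (1 - c) / 2 := Real.sq_sqrt (by linarith)
  have hsinha : Real.sin (α / 2) = a := by
    rw [ha, ← hcα]
    exact Real.sin_half_eq_sqrt hα0.le (by linarith)
  set F : ℝ → ℝ := fun θ => 2 * Real.arcsin (Real.sin (θ / 2) / a) with hF
  have hFcont : Continuous F :=
    continuous_const.mul (Real.continuous_arcsin.comp
      ((Real.continuous_sin.comp (continuous_id.div_const 2)).div_const a))
  -- the integrand vanishes off [-α, α]
  have hvanish : ∀ θ : ℝ, α ≤ |θ| → |θ| ≤ π → f θ = 0 := by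
    intro θ h1 h2
    have : Real.cos θ ≤ c := by
      rw [← Real.cos_abs, ← hcα]
      exact Real.cos_le_cos_of_nonneg_of_le_pi hα0.le h2 h1
    simp [hf, not_lt.2 this]
  have hright0 : Set.EqOn f 0 (Set.uIcc α π) := by
    intro θ hθ
    rw [Set.uIcc_of_le hαπ.le] at hθ
    exact hvanish θ (le_abs.2 (Or.inl hθ.1))
      (abs_le.2 ⟨by linarith [hθ.1, hα0], hθ.2⟩)
  have hleft0 : Set.EqOn f 0 (Set.uIcc (-π) (-α)) := by
    intro θ hθ
    rw [Set.uIcc_of_le (by linarith)] at hθ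
    exact hvanish θ (le_abs.2 (Or.inr (by linarith [hθ.2])))
      (abs_le.2 ⟨hθ.1, by linarith [hθ.2, hα0]⟩)
  have hzint : ∀ u v : ℝ, Set.EqOn f 0 (Set.uIcc u v) → IntervalIntegrable f volume u v := by
    intro u v h
    rw [intervalIntegrable_iff]
    exact (MeasureTheory.integrableOn_congr_fun (h.mono Set.uIoc_subset_uIcc)
      measurableSet_uIoc).2 (MeasureTheory.integrableOn_zero)
  have hrightint := hzint α π hright0
  have hleftint := hzint (-π) (-α) hleft0
  have hright : ∫ θ in α..π, f θ = 0 := by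
    rw [intervalIntegral.integral_congr hright0]; simp
  have hleft : ∫ θ in (-π)..(-α), f θ = 0 := by
    rw [intervalIntegral.integral_congr hleft0]; simp
  -- derivative on the middle interval
  have hderiv : ∀ x ∈ Set.Ioo (-α) α, HasDerivAt F (f x) x := by
    intro x hx
    have hxα : |x| < α := abs_lt.2 ⟨hx.1, hx.2⟩
    have hcos : c < Real.cos x := by
      rw [← Real.cos_abs, ← hcα]
      rcases eq_or_lt_of_le (abs_nonneg x) with h | h
      · rw [← h]
        exact Real.cos_lt_cos_of_nonneg_of_le_pi le_rfl hαπ.le hα0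
      · exact Real.cos_lt_cos_of_nonneg_of_le_pi (abs_nonneg x) hαπ.le hxα
    have hcc : 0 < Real.cos x - c := by linarith
    have hsin_lt : |Real.sin (x / 2)| < a := by
      rw [Real.abs_sin_half, ha]
      exact Real.sqrt_lt_sqrt (by have := Real.cos_le_one x; linarith) (by linarith)
    set y := Real.sin (x / 2) / a with hy
    have hy1 : |y| < 1 := by
      rw [hy, abs_div, abs_of_pos ha0, div_lt_one ha0]; exact hsin_lt
    have hy1' := abs_lt.1 hy1
    have hd1 : HasDerivAt (fun θ : ℝ => Real.sin (θ / 2) / a)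
        (Real.cos (x / 2) * (1 / 2) / a) x := by
      have h2 : HasDerivAt (fun θ : ℝ => θ / 2) (1 / 2) x := (hasDerivAt_id x).div_const 2
      have h3 := (Real.hasDerivAt_sin (x / 2)).comp x h2
      exact (by exact h3 : HasDerivAt (fun θ : ℝ => Real.sin (θ / 2))
        (Real.cos (x / 2) * (1 / 2)) x).div_const a
    have hd2 := ((Real.hasDerivAt_arcsin (by linarith) (by linarith)).comp x hd1).const_mul 2
    have hsq : Real.sin (x / 2) ^ 2 = (1 - Real.cos x) / 2 := by
      have h0 : (0:ℝ) ≤ (1 - Real.cos x) / 2 := by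
        have := Real.cos_le_one x; linarith
      calc Real.sin (x / 2) ^ 2 = |Real.sin (x / 2)| ^ 2 := (sq_abs _).symm
        _ = Real.sqrt ((1 - Real.cos x) / 2) ^ 2 := by rw [Real.abs_sin_half]
        _ = (1 - Real.cos x) / 2 := Real.sq_sqrt h0
    have hkey : Real.sqrt (1 - y ^ 2) = Real.sqrt (Real.cos x - c) / (Real.sqrt 2 * a) := by
      have h1 : 1 - y ^ 2 = (Real.cos x - c) / (Real.sqrt 2 * a) ^ 2 := by
        rw [mul_pow, Real.sq_sqrt (by norm_num : (0:ℝ) ≤ 2), hy, div_pow, hsq, ha2]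
        have h1c : (1:ℝ) - c ≠ 0 := by linarith
        field_simp
        ring
      rw [h1, Real.sqrt_div hcc.le, Real.sqrt_sq (by positivity)]
    have hfx : f x = Real.sqrt 2 * Real.cos (x / 2) / Real.sqrt (Real.cos x - c) := by
      simp [hf, hcos]
    have heq : 2 * (1 / Real.sqrt (1 - y ^ 2) * (Real.cos (x / 2) * (1 / 2) / a)) = f x := by
      rw [hkey, hfx]
      have h2 : Real.sqrt (Real.cos x - c) ≠ 0 := by positivity
      have h3 : Real.sqrt 2 ≠ 0 := by positivity
      field_simp
    rw [← heq]
    exact hd2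
  -- nonnegativity of f on the middle interval
  have hnonneg : ∀ x ∈ Set.Ioo (-α) α, 0 ≤ f x := by
    intro x hx
    simp only [hf]
    split_ifs with h
    · have hcos2 : 0 ≤ Real.cos (x / 2) :=
        Real.cos_nonneg_of_mem_Icc ⟨by linarith [hx.1], by linarith [hx.2]⟩
      exact div_nonneg (mul_nonneg (Real.sqrt_nonneg _) hcos2) (Real.sqrt_nonneg _)
    · exact le_rfl
  have hmidint : IntervalIntegrable f volume (-α) α := by
    apply intervalIntegral.intervalIntegrable_deriv_of_nonneg hFcont.continuousOn
    · rw [min_eq_left (by linarith), max_eq_right (by linarith)]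
      exact hderiv
    · rw [min_eq_left (by linarith), max_eq_right (by linarith)]
      exact hnonneg
  have hFα : F α = π := by
    rw [hF]
    simp only [hsinha, div_self ha0.ne', Real.arcsin_one]
    ring
  have hFnα : F (-α) = -π := by
    rw [hF]
    simp only [neg_div, Real.sin_neg, hsinha, Real.arcsin_neg, div_self ha0.ne',
      Real.arcsin_one]
    ring
  have hmid : ∫ θ in (-α)..α, f θ = 2 * π := by
    rw [intervalIntegral.integral_eq_sub_of_hasDerivAt_of_le (by linarith)
      hFcont.continuousOn hderiv hmidint, hFα, hFnα]
    ring
  have htot : ∫ θ in (-π)..π, f θ = 2 * π := by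
    rw [← intervalIntegral.integral_add_adjacent_intervals hleftint (hmidint.trans hrightint),
      ← intervalIntegral.integral_add_adjacent_intervals hmidint hrightint,
      hleft, hright, hmid]
    ring
  rw [htot]
  field_simp
end

section
/- Let t > 0 and let α ∈ (−π,π) with α ≠ 0. Then e^{iα}·exp(t(e^{iα}+1)/(2(e^{iα}−1))) = 1 if and only if there exists an integer n ≥ 0 such that g_t(cos α) = 2πn, i.e. if and only if cos α = x_n(t) for some n ≥ 0. Hence the set of solutions on the unit circle of the equation θ_t(ζ) = 1 is exactly { x_n(t) ± i·√(1 − x_n(t)²) : n ∈ ℕ }. -/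
lemma key_half (c : ℂ) :
    (Complex.exp (2*c*Complex.I) + 1) * Complex.sin c
      = -Complex.I * Complex.cos c * (Complex.exp (2*c*Complex.I) - 1) := by
  rw [Complex.exp_mul_I, Complex.cos_two_mul, Complex.sin_two_mul]
  linear_combination (2 * Complex.cos c * Complex.I) * Complex.sin_sq_add_cos_sq c +
    (2 * Complex.cos c ^ 2 * Complex.sin c) * Complex.I_sq

lemma theta_formula (t α : ℝ) (hs : Real.sin (α/2) ≠ 0) :
    Complex.exp ((α : ℂ) * Complex.I) *
      Complex.exp ((t : ℂ) * (Complex.exp ((α : ℂ) * Complex.I) + 1) /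
        (2 * (Complex.exp ((α : ℂ) * Complex.I) - 1))) =
    Complex.exp (((α - t / 2 * (Real.cos (α/2) / Real.sin (α/2)) : ℝ) : ℂ) * Complex.I) := by
  have key := key_half ((α:ℂ)/2)
  rw [show 2*((α:ℂ)/2) = (α:ℂ) by ring] at key
  have hS : Complex.sin ((α:ℂ)/2) ≠ 0 := by
    rw [show ((α:ℂ)/2) = ((α/2 : ℝ):ℂ) by push_cast; ring, ← Complex.ofReal_sin]
    exact_mod_cast hs
  have he1 : Complex.exp ((α:ℂ)*Complex.I) - 1 ≠ 0 := by
    intro h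
    rw [sub_eq_zero] at h
    rw [h] at key
    simp at key
    exact hS key
  have harg : (t : ℂ) * (Complex.exp ((α:ℂ)*Complex.I) + 1) /
      (2 * (Complex.exp ((α:ℂ)*Complex.I) - 1))
      = -Complex.I * ((t:ℂ) * Complex.cos ((α:ℂ)/2)) / (2 * Complex.sin ((α:ℂ)/2)) := by
    rw [div_eq_div_iff (by exact mul_ne_zero two_ne_zero he1) (mul_ne_zero two_ne_zero hS)]
    linear_combination (2 * (t:ℂ)) * key
  rw [← Complex.exp_add, harg]
  congr 1
  push_cast
  field_simp
  ring

lemma exp_real_eq_one_iff (β : ℝ) :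
    Complex.exp ((β:ℂ) * Complex.I) = 1 ↔ ∃ k : ℤ, β = 2 * Real.pi * k := by
  rw [Complex.exp_eq_one_iff]
  constructor
  · rintro ⟨n, hn⟩
    refine ⟨n, ?_⟩
    have h2 : (β:ℂ) * Complex.I = ((2*Real.pi*(n:ℝ) : ℝ):ℂ) * Complex.I := by
      push_cast
      linear_combination hn
    have := mul_right_cancel₀ Complex.I_ne_zero h2
    exact_mod_cast this
  · rintro ⟨k, hk⟩
    exact ⟨k, by rw [hk]; push_cast; ring⟩

lemma sqrt_half_angle (β : ℝ) (hβ : β ∈ Set.Ioo 0 Real.pi) :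
    Real.sqrt ((1 + Real.cos β) / (1 - Real.cos β))
      = Real.cos (β/2) / Real.sin (β/2) := by
  have hs : 0 < Real.sin (β/2) :=
    Real.sin_pos_of_pos_of_lt_pi (by linarith [hβ.1]) (by linarith [hβ.2, Real.pi_pos])
  have hc : 0 < Real.cos (β/2) :=
    Real.cos_pos_of_mem_Ioo ⟨by linarith [hβ.1, Real.pi_pos], by linarith [hβ.2]⟩
  have hpy := Real.sin_sq_add_cos_sq (β/2)
  have e1 : 1 + Real.cos β = 2 * Real.cos (β/2)^2 := by
    have h := Real.cos_two_mul (β/2)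
    rw [show 2*(β/2) = β by ring] at h
    linarith
  have e2 : 1 - Real.cos β = 2 * Real.sin (β/2)^2 := by linarith
  rw [e1, e2,
    show (2 * Real.cos (β/2)^2)/(2 * Real.sin (β/2)^2)
      = (Real.cos (β/2) / Real.sin (β/2))^2 by field_simp]
  exact Real.sqrt_sq (div_nonneg hc.le hs.le)

lemma G_strictMonoOn (t : ℝ) (ht : 0 < t) :
    StrictMonoOn (fun y => t/2 * Real.sqrt ((1+y)/(1-y)) - Real.arccos y)
      (Set.Ioo (-1:ℝ) 1) := by
  intro a ha b hb hab
  have h1 : Real.sqrt ((1+a)/(1-a)) ≤ Real.sqrt ((1+b)/(1-b)) := by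
    apply Real.sqrt_le_sqrt
    rw [div_le_div_iff₀ (by linarith [ha.2]) (by linarith [hb.2])]
    nlinarith
  have h2 : Real.arccos b < Real.arccos a :=
    Real.strictAntiOn_arccos ⟨ha.1.le, ha.2.le⟩ ⟨hb.1.le, hb.2.le⟩ hab
  have h3 := mul_le_mul_of_nonneg_left h1 (by positivity : (0:ℝ) ≤ t/2)
  dsimp only
  linarith

lemma cos_mem_Ioo (β : ℝ) (hβ : β ∈ Set.Ioo 0 Real.pi) :
    Real.cos β ∈ Set.Ioo (-1:ℝ) 1 := by
  constructor
  · have := Real.cos_lt_cos_of_nonneg_of_le_pi (le_of_lt hβ.1) (le_refl Real.pi) hβ.2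
    rw [Real.cos_pi] at this
    linarith
  · have := Real.cos_lt_cos_of_nonneg_of_le_pi (le_refl 0) hβ.2.le hβ.1
    rw [Real.cos_zero] at this
    linarith

/-- For `t > 0` and `α ∈ (-π,π)`, `α ≠ 0`: `θ_t(e^{iα}) = 1` iff `cos α = x_n(t)` for
some `n ≥ 0`, where `x_n(t) ∈ (-1,1)` is the unique solution of `g_t(x) = 2πn`.
Hence the solutions on the unit circle of `θ_t(ζ) = 1` are exactly
`{x_n(t) ± i√(1 - x_n(t)²) : n ∈ ℕ}`. -/
theorem stmt_12 (t : ℝ) (ht : 0 < t)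
    (x : ℕ → ℝ)
    (hx : ∀ n : ℕ, x n ∈ Set.Ioo (-1 : ℝ) 1 ∧
      t / 2 * Real.sqrt ((1 + x n) / (1 - x n)) - Real.arccos (x n) = 2 * Real.pi * n) :
    (∀ α : ℝ, α ∈ Set.Ioo (-Real.pi) Real.pi → α ≠ 0 →
      (Complex.exp ((α : ℂ) * Complex.I) *
          Complex.exp ((t : ℂ) * (Complex.exp ((α : ℂ) * Complex.I) + 1) /
            (2 * (Complex.exp ((α : ℂ) * Complex.I) - 1))) = 1 ↔
        ∃ n : ℕ, Real.cos α = x n)) ∧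
    {ζ : ℂ | ‖ζ‖ = 1 ∧ ζ ≠ 1 ∧
        ζ * Complex.exp ((t : ℂ) * (ζ + 1) / (2 * (ζ - 1))) = 1} =
      {ζ : ℂ | ∃ n : ℕ,
        ζ = (x n : ℂ) + (Real.sqrt (1 - (x n) ^ 2) : ℂ) * Complex.I ∨
        ζ = (x n : ℂ) - (Real.sqrt (1 - (x n) ^ 2) : ℂ) * Complex.I} := by
  have main : ∀ α : ℝ, α ∈ Set.Ioo (-Real.pi) Real.pi → α ≠ 0 →
      (Complex.exp ((α : ℂ) * Complex.I) *
          Complex.exp ((t : ℂ) * (Complex.exp ((α : ℂ) * Complex.I) + 1) /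
            (2 * (Complex.exp ((α : ℂ) * Complex.I) - 1))) = 1 ↔
        ∃ n : ℕ, Real.cos α = x n) := by
    intro α hα hα0
    have hπ := Real.pi_pos
    set β := |α| with hβdef
    have hβ0 : 0 < β := abs_pos.mpr hα0
    have hβπ : β < Real.pi := abs_lt.mpr ⟨hα.1, hα.2⟩
    have hβmem : β ∈ Set.Ioo 0 Real.pi := ⟨hβ0, hβπ⟩
    have hcos : Real.cos β = Real.cos α := Real.cos_abs α
    have hsβ : 0 < Real.sin (β/2) :=
      Real.sin_pos_of_pos_of_lt_pi (by linarith) (by linarith)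
    have hcβ : 0 < Real.cos (β/2) :=
      Real.cos_pos_of_mem_Ioo ⟨by linarith, by linarith⟩
    have hsα : Real.sin (α/2) ≠ 0 := by
      rcases lt_or_gt_of_ne hα0 with h | h
      · have hpos : 0 < Real.sin (-(α/2)) :=
          Real.sin_pos_of_pos_of_lt_pi (by linarith) (by linarith [hα.1])
        rw [Real.sin_neg] at hpos
        linarith
      · exact ne_of_gt (Real.sin_pos_of_pos_of_lt_pi (by linarith) (by linarith [hα.2]))
    -- the value D = g_t(cos α)
    set D : ℝ := t/2 * (Real.cos (β/2)/Real.sin (β/2)) - β with hDdef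
    have hGD : t/2 * Real.sqrt ((1 + Real.cos α)/(1 - Real.cos α)) - Real.arccos (Real.cos α)
        = D := by
      rw [← hcos, sqrt_half_angle β hβmem, Real.arccos_cos hβ0.le hβπ.le]
    have hDgt : -Real.pi < D := by
      have : 0 < t/2 * (Real.cos (β/2)/Real.sin (β/2)) := by positivity
      rw [hDdef]; linarith
    -- relate exponent to ±D
    have hval : α - t/2 * (Real.cos (α/2)/Real.sin (α/2)) = -D ∨
        α - t/2 * (Real.cos (α/2)/Real.sin (α/2)) = D := by
      rcases abs_choice α with h | h
      · left
        rw [hDdef, hβdef.trans h]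
        ring
      · right
        rw [hDdef, hβdef.trans h, show (-α)/2 = -(α/2) by ring, Real.cos_neg, Real.sin_neg]
        ring
    rw [theta_formula t α hsα, exp_real_eq_one_iff]
    have step1 : (∃ k : ℤ, α - t/2 * (Real.cos (α/2)/Real.sin (α/2)) = 2*Real.pi*k)
        ↔ ∃ k : ℤ, D = 2*Real.pi*k := by
      constructor
      · rintro ⟨k, hk⟩
        rcases hval with h | h
        · exact ⟨-k, by rw [h] at hk; push_cast; linarith⟩
        · exact ⟨k, by rw [h] at hk; exact hk⟩
      · rintro ⟨k, hk⟩
        rcases hval with h | h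
        · exact ⟨-k, by rw [h, hk]; push_cast; ring⟩
        · exact ⟨k, by rw [h, hk]⟩
    have step2 : (∃ k : ℤ, D = 2*Real.pi*k) ↔ ∃ n : ℕ, D = 2*Real.pi*n := by
      constructor
      · rintro ⟨k, hk⟩
        have hk0 : 0 ≤ k := by
          by_contra hneg
          push_neg at hneg
          have hk1 : k ≤ -1 := by omega
          have : (k:ℝ) ≤ -1 := by exact_mod_cast hk1
          nlinarith [hDgt, hk]
        lift k to ℕ using hk0 with n
        exact ⟨n, by exact_mod_cast hk⟩
      · rintro ⟨n, hn⟩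
        exact ⟨n, by exact_mod_cast hn⟩
    have hcosmem : Real.cos α ∈ Set.Ioo (-1:ℝ) 1 := by
      rw [← hcos]; exact cos_mem_Ioo β hβmem
    have step3 : (∃ n : ℕ, D = 2*Real.pi*n) ↔ ∃ n : ℕ, Real.cos α = x n := by
      constructor
      · rintro ⟨n, hn⟩
        refine ⟨n, ?_⟩
        have h1 : t/2 * Real.sqrt ((1 + Real.cos α)/(1 - Real.cos α)) - Real.arccos (Real.cos α)
            = t/2 * Real.sqrt ((1 + x n)/(1 - x n)) - Real.arccos (x n) := by
          rw [hGD, hn, (hx n).2]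
        exact (G_strictMonoOn t ht).injOn hcosmem (hx n).1 h1
      · rintro ⟨n, hn⟩
        refine ⟨n, ?_⟩
        rw [← hGD, hn]
        exact (hx n).2
    rw [step1, step2, step3]
  refine ⟨main, ?_⟩
  ext ζ
  simp only [Set.mem_setOf_eq]
  constructor
  · rintro ⟨habs, hne1, heq⟩
    have hζ : ζ = Complex.exp ((ζ.arg : ℂ) * Complex.I) := by
      have h := Complex.norm_mul_exp_arg_mul_I ζ
      rw [habs] at h
      simpa using h.symm
    have hnegone : ζ ≠ -1 := by
      intro h
      rw [h] at heq
      norm_num at heq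
    have hαπ : ζ.arg ≠ Real.pi := by
      intro h
      apply hnegone
      rw [hζ, h]
      simpa using Complex.exp_pi_mul_I
    have hα0 : ζ.arg ≠ 0 := by
      intro h
      apply hne1
      rw [hζ, h]
      simp
    have hmem : ζ.arg ∈ Set.Ioo (-Real.pi) Real.pi :=
      ⟨Complex.neg_pi_lt_arg ζ, lt_of_le_of_ne (Complex.arg_le_pi ζ) hαπ⟩
    rw [hζ] at heq
    obtain ⟨n, hn⟩ := (main ζ.arg hmem hα0).mp heq
    have hsin2 : Real.sin ζ.arg ^ 2 = 1 - (x n)^2 := by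
      have := Real.sin_sq_add_cos_sq ζ.arg
      rw [hn] at this
      linarith
    rw [Complex.exp_mul_I, ← Complex.ofReal_cos, ← Complex.ofReal_sin] at hζ
    have hform : ζ = (Real.cos ζ.arg : ℂ) + (Real.sin ζ.arg : ℂ) * Complex.I := hζ
    rcases le_or_gt 0 (Real.sin ζ.arg) with hpos | hneg
    · refine ⟨n, Or.inl ?_⟩
      rw [hform, hn]
      congr 1
      congr 1
      rw [← hsin2, Real.sqrt_sq hpos]
    · refine ⟨n, Or.inr ?_⟩
      rw [hform, hn]
      have : Real.sqrt (1 - x n ^ 2) = -Real.sin ζ.arg := by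
        rw [← hsin2, Real.sqrt_sq_eq_abs, abs_of_neg hneg]
      rw [this]
      push_cast
      ring
  · rintro ⟨n, hor⟩
    obtain ⟨⟨hxn1, hxn2⟩, hxeq⟩ := hx n
    set α := Real.arccos (x n) with hαdef
    have hcosα : Real.cos α = x n := Real.cos_arccos hxn1.le hxn2.le
    have hsinα : Real.sin α = Real.sqrt (1 - (x n)^2) := Real.sin_arccos (x n)
    have hα0 : 0 < α := Real.arccos_pos.mpr hxn2
    have hαπ : α < Real.pi := by
      rw [← Real.arccos_neg_one]
      exact Real.strictAntiOn_arccos ⟨le_refl _, by norm_num⟩ ⟨hxn1.le, hxn2.le⟩ hxn1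
    have hπ := Real.pi_pos
    rcases hor with h | h
    · have hζ : ζ = Complex.exp ((α : ℂ) * Complex.I) := by
        rw [Complex.exp_mul_I, ← Complex.ofReal_cos, ← Complex.ofReal_sin, hcosα, hsinα, h]
      refine ⟨?_, ?_, ?_⟩
      · rw [hζ]; exact Complex.norm_exp_ofReal_mul_I α
      · intro hone
        rw [hone] at h
        have : (1:ℂ).re = ((x n : ℂ) + (Real.sqrt (1 - (x n)^2) : ℂ) * Complex.I).re := by
          rw [h]
        simp at this
        linarith
      · rw [hζ]
        exact (main α ⟨by linarith, hαπ⟩ (ne_of_gt hα0)).mpr ⟨n, by rw [hcosα]⟩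
    · have hζ : ζ = Complex.exp (((-α : ℝ) : ℂ) * Complex.I) := by
        rw [Complex.exp_mul_I, ← Complex.ofReal_cos, ← Complex.ofReal_sin, Real.cos_neg,
          Real.sin_neg, hcosα, hsinα, h]
        push_cast
        ring
      refine ⟨?_, ?_, ?_⟩
      · rw [hζ]; exact Complex.norm_exp_ofReal_mul_I (-α)
      · intro hone
        rw [hone] at h
        have : (1:ℂ).re = ((x n : ℂ) - (Real.sqrt (1 - (x n)^2) : ℂ) * Complex.I).re := by
          rw [h]
        simp at this
        linarith
      · rw [hζ]
        exact (main (-α) ⟨by linarith, by linarith⟩ (by linarith)).mpr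
          ⟨n, by rw [Real.cos_neg, hcosα]⟩
end

section
/- Let t > 0 and for each integer n ≥ 0 let x_n(t) ∈ (−1,1) be the unique solution of g_t(x) = 2πn. Then the sequence (x_n(t))_{n≥0} is strictly increasing and converges to 1 as n → ∞. Consequently, the solutions on the unit circle of θ_t(ζ) = 1 form a sequence of points accumulating only at 1, and they are all contained in the arc { e^{iθ} : −arccos(x_0(t)) ≤ θ ≤ arccos(x_0(t)) }. -/
open Real Complex

private lemma aux_arccos_anti {a b : ℝ} (h : a ≤ b) : Real.arccos b ≤ Real.arccos a := by
  simp only [Real.arccos]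
  have := Real.monotone_arcsin h
  linarith

private lemma aux_g_lt (t : ℝ) (ht : 0 < t) {a b : ℝ} (ha : a ∈ Set.Ioo (-1:ℝ) 1)
    (hb : b ∈ Set.Ioo (-1:ℝ) 1) (hab : a < b) :
    t / 2 * Real.sqrt ((1 + a) / (1 - a)) - Real.arccos a <
    t / 2 * Real.sqrt ((1 + b) / (1 - b)) - Real.arccos b := by
  obtain ⟨ha1, ha2⟩ := ha
  obtain ⟨hb1, hb2⟩ := hb
  have h1 : (1 + a) / (1 - a) < (1 + b) / (1 - b) := by
    rw [div_lt_div_iff₀ (by linarith) (by linarith)]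
    nlinarith
  have h2 : Real.sqrt ((1 + a) / (1 - a)) < Real.sqrt ((1 + b) / (1 - b)) :=
    Real.sqrt_lt_sqrt (div_nonneg (by linarith) (by linarith)) h1
  have h3 : Real.arccos b ≤ Real.arccos a := aux_arccos_anti hab.le
  nlinarith

private lemma aux_g_inj (t : ℝ) (ht : 0 < t) {a b : ℝ} (ha : a ∈ Set.Ioo (-1:ℝ) 1)
    (hb : b ∈ Set.Ioo (-1:ℝ) 1)
    (h : t / 2 * Real.sqrt ((1 + a) / (1 - a)) - Real.arccos a =
      t / 2 * Real.sqrt ((1 + b) / (1 - b)) - Real.arccos b) : a = b := by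
  rcases lt_trichotomy a b with hlt | heq | hgt
  · exact absurd h (ne_of_lt (aux_g_lt t ht ha hb hlt))
  · exact heq
  · exact absurd h.symm (ne_of_lt (aux_g_lt t ht hb ha hgt))

/-- For `t > 0`, the sequence `(x_n(t))` of solutions of `g_t(x) = 2πn` is strictly
increasing and converges to `1`; consequently the solutions on the unit circle of
`θ_t(ζ) = 1` accumulate only at `1` and are all contained in the arc
`{e^{iθ} : -arccos(x_0(t)) ≤ θ ≤ arccos(x_0(t))}`. -/
theorem stmt_13 (t : ℝ) (ht : 0 < t)
    (x : ℕ → ℝ)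
    (hx : ∀ n : ℕ, x n ∈ Set.Ioo (-1 : ℝ) 1 ∧
      t / 2 * Real.sqrt ((1 + x n) / (1 - x n)) - Real.arccos (x n) = 2 * Real.pi * n) :
    StrictMono x ∧
    Filter.Tendsto x Filter.atTop (nhds 1) ∧
    {ζ : ℂ | ‖ζ‖ = 1 ∧ ζ ≠ 1 ∧
        ζ * Complex.exp ((t : ℂ) * (ζ + 1) / (2 * (ζ - 1))) = 1} ⊆
      {ζ : ℂ | ∃ θ : ℝ, -Real.arccos (x 0) ≤ θ ∧ θ ≤ Real.arccos (x 0) ∧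
        ζ = Complex.exp ((θ : ℂ) * Complex.I)} := by
  have hπ := Real.pi_pos
  -- strict monotonicity
  have hmono : StrictMono x := by
    intro n m hnm
    by_contra hcon
    push_neg at hcon
    rcases eq_or_lt_of_le hcon with heq | hlt
    · have h1 := (hx m).2
      rw [heq, (hx n).2] at h1
      have h2 : (n : ℝ) = m :=
        mul_left_cancel₀ (show (2 * Real.pi : ℝ) ≠ 0 by positivity) h1
      have : n = m := by exact_mod_cast h2
      omega
    · have h1 := aux_g_lt t ht (hx m).1 (hx n).1 hlt
      rw [(hx m).2, (hx n).2] at h1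
      have : (m : ℝ) < n := by
        have h2π : 0 < 2 * Real.pi := by linarith
        nlinarith
      have : (m : ℕ) < n := by exact_mod_cast this
      omega
  -- key: for y in Ioo with g y = 2π m (m : ℤ), we get x 0 ≤ y
  have hkey : ∀ (y : ℝ), y ∈ Set.Ioo (-1:ℝ) 1 → ∀ m : ℤ,
      t / 2 * Real.sqrt ((1 + y) / (1 - y)) - Real.arccos y = 2 * Real.pi * m →
      x 0 ≤ y := by
    intro y hy m hgy
    have hm0 : 0 ≤ m := by
      have h1 : Real.arccos y ≤ Real.pi := Real.arccos_le_pi y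
      have h2 : 0 ≤ Real.sqrt ((1 + y) / (1 - y)) := Real.sqrt_nonneg _
      have h3 : -Real.pi ≤ 2 * Real.pi * m := by
        rw [← hgy]; nlinarith
      by_contra hneg
      push_neg at hneg
      have : (m : ℝ) ≤ -1 := by exact_mod_cast Int.le_sub_one_of_lt hneg
      nlinarith
    have hgy' : t / 2 * Real.sqrt ((1 + y) / (1 - y)) - Real.arccos y =
        2 * Real.pi * (m.toNat : ℕ) := by
      rw [hgy]; congr 1
      exact_mod_cast (Int.toNat_of_nonneg hm0).symm
    have : y = x m.toNat :=
      aux_g_inj t ht hy (hx m.toNat).1 (by rw [hgy', (hx m.toNat).2])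
    rw [this]
    exact hmono.monotone (Nat.zero_le _)
  refine ⟨hmono, ?_, ?_⟩
  · -- convergence to 1
    rw [tendsto_order]
    constructor
    · intro a ha
      rcases lt_or_ge a (x 0) with h0 | h0
      · exact Filter.Eventually.of_forall fun n => lt_of_lt_of_le h0 (hmono.monotone (Nat.zero_le n))
      · have haIoo : a ∈ Set.Ioo (-1:ℝ) 1 := ⟨lt_of_lt_of_le (hx 0).1.1 h0, ha⟩
        obtain ⟨N, hN0⟩ := exists_nat_gt
          ((t / 2 * Real.sqrt ((1 + a) / (1 - a)) - Real.arccos a) / (2 * Real.pi))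
        have hN : t / 2 * Real.sqrt ((1 + a) / (1 - a)) - Real.arccos a < 2 * Real.pi * N := by
          rw [div_lt_iff₀ (by linarith)] at hN0
          linarith
        have hxN : a < x N := by
          by_contra hcon
          push_neg at hcon
          rcases eq_or_lt_of_le hcon with heq | hlt
          · have := (hx N).2
            rw [heq] at this
            linarith [hN]
          · have h1 := aux_g_lt t ht (hx N).1 haIoo hlt
            rw [(hx N).2] at h1
            linarith [hN]
        filter_upwards [Filter.eventually_ge_atTop N] with n hn
        exact lt_of_lt_of_le hxN (hmono.monotone hn)
    · intro a ha
      exact Filter.Eventually.of_forall fun n => lt_trans (hx n).1.2 ha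
  · -- arc containment
    rintro ζ ⟨habs, hne, heq⟩
    set α := ζ.arg with hα
    have hζexp : Complex.exp ((α : ℂ) * Complex.I) = ζ := by
      have := Complex.norm_mul_exp_arg_mul_I ζ
      rwa [habs, Complex.ofReal_one, one_mul] at this
    have hα0 : α ≠ 0 := by
      intro h
      rw [h] at hζexp
      simp at hζexp
      exact hne hζexp.symm
    have hαlo : -Real.pi < α := Complex.neg_pi_lt_arg ζ
    have hαhi : α ≤ Real.pi := Complex.arg_le_pi ζ
    have hcos1 : Real.cos α < 1 := by
      rcases lt_or_eq_of_le (Real.cos_le_one α) with h | h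
      · exact h
      · exfalso
        have := (Real.cos_eq_one_iff_of_lt_of_lt (by linarith) (by linarith)).1 h
        exact hα0 this
    set c : ℝ := t * Real.sin α / (2 * (1 - Real.cos α)) with hc
    have hone : (1 : ℝ) - Real.cos α ≠ 0 := by linarith
    have hζc : ζ = (Real.cos α : ℂ) + (Real.sin α : ℂ) * Complex.I := by
      rw [← hζexp, Complex.exp_mul_I, Complex.ofReal_cos, Complex.ofReal_sin]
    have hsub : ζ - 1 ≠ 0 := sub_ne_zero.2 hne
    have hA : (t : ℂ) * (ζ + 1) / (2 * (ζ - 1)) = (↑(-c) : ℂ) * Complex.I := by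
      rw [div_eq_iff (by simp [hsub])]
      have key1 : t * (Real.cos α + 1) = 2 * c * Real.sin α := by
        rw [hc]
        field_simp
        nlinarith [Real.sin_sq_add_cos_sq α]
      have key2 : t * Real.sin α = 2 * c * (1 - Real.cos α) := by
        rw [hc]; field_simp
      have e1 : (t : ℂ) * ((Real.cos α : ℂ) + 1) = 2 * (c : ℂ) * (Real.sin α : ℂ) := by
        exact_mod_cast congrArg (Complex.ofReal ·) key1
      have e2 : (t : ℂ) * (Real.sin α : ℂ) = 2 * (c : ℂ) * (1 - (Real.cos α : ℂ)) := by
        exact_mod_cast congrArg (Complex.ofReal ·) key2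
      rw [hζc]
      push_cast at e1 e2 ⊢
      linear_combination e1 + Complex.I * e2 + (2 * (c:ℂ) * Complex.sin (α:ℂ)) * Complex.I_sq
    have hB : Complex.exp ((↑(α - c) : ℂ) * Complex.I) = 1 := by
      have : (↑(α - c) : ℂ) * Complex.I = (α : ℂ) * Complex.I + (↑(-c) : ℂ) * Complex.I := by
        push_cast; ring
      rw [this, Complex.exp_add, ← hA, hζexp]
      exact heq
    obtain ⟨n, hn⟩ := Complex.exp_eq_one_iff.1 hB
    have hn' : α - c = n * (2 * Real.pi) := by
      have h2 : (↑(α - c) : ℂ) * Complex.I = ((n : ℂ) * (2 * (Real.pi : ℂ))) * Complex.I := by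
        rw [hn]; ring
      have h3 := mul_right_cancel₀ Complex.I_ne_zero h2
      exact_mod_cast h3
    -- cos α > -1
    have hcosm1 : -1 < Real.cos α := by
      rcases lt_or_eq_of_le (Real.neg_one_le_cos α) with h | h
      · exact h
      · exfalso
        have hsin : Real.sin α = 0 := by
          have := Real.sin_sq_add_cos_sq α
          nlinarith
        have hc0 : c = 0 := by rw [hc, hsin]; simp
        rw [hc0, sub_zero] at hn'
        rcases lt_trichotomy n 0 with hlt | heq0 | hgt
        · have : (n : ℝ) ≤ -1 := by exact_mod_cast Int.le_sub_one_of_lt hlt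
          nlinarith
        · rw [heq0] at hn'; simp at hn'; exact hα0 hn'
        · have : (1 : ℝ) ≤ n := by exact_mod_cast hgt
          nlinarith
    have hcosIoo : Real.cos α ∈ Set.Ioo (-1:ℝ) 1 := ⟨hcosm1, hcos1⟩
    rcases lt_or_gt_of_ne hα0 with hαneg | hαpos
    · -- α < 0
      have hsin : Real.sin α ≤ 0 := by
        have := Real.sin_nonneg_of_nonneg_of_le_pi (x := -α) (by linarith) (by linarith)
        rw [Real.sin_neg] at this
        linarith
      have hsqrt : Real.sqrt ((1 + Real.cos α) / (1 - Real.cos α)) =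
          (-Real.sin α) / (1 - Real.cos α) := by
        rw [show (1 + Real.cos α) / (1 - Real.cos α) =
            ((-Real.sin α) / (1 - Real.cos α))^2 by
          field_simp
          nlinarith [Real.sin_sq_add_cos_sq α]]
        exact Real.sqrt_sq (div_nonneg (by linarith) (by linarith))
      have harccos : Real.arccos (Real.cos α) = -α := by
        rw [← Real.cos_neg]
        exact Real.arccos_cos (by linarith) (by linarith)
      have hg : t / 2 * Real.sqrt ((1 + Real.cos α) / (1 - Real.cos α)) -
          Real.arccos (Real.cos α) = 2 * Real.pi * n := by
        rw [hsqrt, harccos]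
        have hcc : t / 2 * ((-Real.sin α) / (1 - Real.cos α)) = -c := by
          rw [hc]; field_simp
        rw [hcc]
        linarith [hn']
      have hx0 : x 0 ≤ Real.cos α := hkey _ hcosIoo n hg
      refine ⟨α, ?_, ?_, hζexp.symm⟩
      · have := aux_arccos_anti hx0
        rw [harccos] at this
        linarith
      · linarith [Real.arccos_nonneg (x 0)]
    · -- α > 0
      have hsin : 0 ≤ Real.sin α := Real.sin_nonneg_of_nonneg_of_le_pi hαpos.le hαhi
      have hsqrt : Real.sqrt ((1 + Real.cos α) / (1 - Real.cos α)) =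
          Real.sin α / (1 - Real.cos α) := by
        rw [show (1 + Real.cos α) / (1 - Real.cos α) =
            (Real.sin α / (1 - Real.cos α))^2 by
          field_simp
          nlinarith [Real.sin_sq_add_cos_sq α]]
        exact Real.sqrt_sq (div_nonneg hsin (by linarith))
      have harccos : Real.arccos (Real.cos α) = α :=
        Real.arccos_cos hαpos.le hαhi
      have hg : t / 2 * Real.sqrt ((1 + Real.cos α) / (1 - Real.cos α)) -
          Real.arccos (Real.cos α) = 2 * Real.pi * ((-n : ℤ) : ℝ) := by
        rw [hsqrt, harccos]
        have hcc : t / 2 * (Real.sin α / (1 - Real.cos α)) = c := by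
          rw [hc]; field_simp
        rw [hcc]
        push_cast
        linarith [hn']
      have hx0 : x 0 ≤ Real.cos α := hkey _ hcosIoo (-n) hg
      refine ⟨α, ?_, ?_, hζexp.symm⟩
      · linarith [Real.arccos_nonneg (x 0)]
      · have := aux_arccos_anti hx0
        rw [harccos] at this
        linarith
end

section
/- Let t > 0 and let α ∈ (−π,π), α ≠ 0, be such that θ_t(e^{iα}) = 1, where θ_t(z) = z·exp(t(z+1)/(2(z−1))). Then the complex derivative of θ_t at ζ = e^{iα} satisfies |θ_t'(e^{iα})| = (t + 2(1 − cos α))/(2(1 − cos α)); equivalently, 1/|θ_t'(e^{iα})| = 2(1 − cos α)/(t + 2(1 − cos α)). -/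
/-- For `t > 0` and `α ∈ (-π,π)`, `α ≠ 0`, with `θ_t(e^{iα}) = 1` where
`θ_t(z) = z exp(t(z+1)/(2(z-1)))`, the complex derivative satisfies
`|θ_t'(e^{iα})| = (t + 2(1 - cos α))/(2(1 - cos α))`. -/
theorem stmt_15 (t : ℝ) (ht : 0 < t) (α : ℝ)
    (hα : α ∈ Set.Ioo (-Real.pi) Real.pi) (hα0 : α ≠ 0)
    (hroot : Complex.exp ((α : ℂ) * Complex.I) *
      Complex.exp ((t : ℂ) * (Complex.exp ((α : ℂ) * Complex.I) + 1) /
        (2 * (Complex.exp ((α : ℂ) * Complex.I) - 1))) = 1) :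
    ‖deriv (fun z : ℂ => z * Complex.exp ((t : ℂ) * (z + 1) / (2 * (z - 1))))
        (Complex.exp ((α : ℂ) * Complex.I))‖ =
      (t + 2 * (1 - Real.cos α)) / (2 * (1 - Real.cos α)) := by
  set ζ : ℂ := Complex.exp ((α : ℂ) * Complex.I) with hζdef
  have hζ0 : ζ ≠ 0 := Complex.exp_ne_zero _
  have hcoslt : Real.cos α < 1 := by
    rcases lt_or_eq_of_le (Real.cos_le_one α) with h | h
    · exact h
    · exact absurd ((Real.cos_eq_one_iff_of_lt_of_lt
        (by nlinarith [Real.pi_pos, hα.1]) (by nlinarith [Real.pi_pos, hα.2])).mp h) hα0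
  have hc : (0:ℝ) < 1 - Real.cos α := by linarith
  have hζ1 : ζ ≠ 1 := by
    intro h
    rw [hζdef, Complex.exp_eq_one_iff] at h
    obtain ⟨n, hn⟩ := h
    have h1 : (α : ℂ) * Complex.I = ((n : ℝ) * (2*Real.pi) : ℝ) * Complex.I := by
      push_cast; rw [hn]; ring
    have h2 : α = (n:ℝ) * (2*Real.pi) := by
      have := mul_right_cancel₀ Complex.I_ne_zero h1
      exact_mod_cast this
    rcases lt_trichotomy n 0 with h' | h' | h'
    · have hn1 : n ≤ -1 := by omega
      have : (n:ℝ) ≤ -1 := by exact_mod_cast hn1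
      nlinarith [hα.1, Real.pi_pos]
    · rw [h', Int.cast_zero, zero_mul] at h2; exact hα0 h2
    · have : (1:ℝ) ≤ (n:ℝ) := by exact_mod_cast h'
      nlinarith [hα.2, Real.pi_pos]
  have hζm1 : ζ - 1 ≠ 0 := sub_ne_zero.mpr hζ1
  have hden : 2*(ζ-1) ≠ 0 := mul_ne_zero two_ne_zero hζm1
  -- derivative
  have hnum : HasDerivAt (fun z : ℂ => (t:ℂ)*(z+1)) (t:ℂ) ζ := by
    simpa using ((hasDerivAt_id ζ).add_const 1).const_mul (t:ℂ)
  have hden' : HasDerivAt (fun z : ℂ => 2*(z-1)) 2 ζ := by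
    simpa using ((hasDerivAt_id ζ).sub_const 1).const_mul (2:ℂ)
  have hg : HasDerivAt (fun z : ℂ => (t:ℂ)*(z+1)/(2*(z-1)))
      (((t:ℂ)*(2*(ζ-1)) - (t:ℂ)*(ζ+1)*2)/(2*(ζ-1))^2) ζ := hnum.div hden' hden
  have hf : HasDerivAt (fun z : ℂ => z * Complex.exp ((t : ℂ) * (z + 1) / (2 * (z - 1))))
      (1 * Complex.exp ((t:ℂ)*(ζ+1)/(2*(ζ-1))) +
        ζ * (Complex.exp ((t:ℂ)*(ζ+1)/(2*(ζ-1))) *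
          (((t:ℂ)*(2*(ζ-1)) - (t:ℂ)*(ζ+1)*2)/(2*(ζ-1))^2))) ζ :=
    (hasDerivAt_id ζ).mul hg.cexp
  rw [hf.deriv]
  -- exp value
  have hexp : Complex.exp ((t:ℂ)*(ζ+1)/(2*(ζ-1))) = ζ⁻¹ := by
    have h := congrArg (fun w => ζ⁻¹ * w) hroot
    simp only [mul_one, ← mul_assoc, inv_mul_cancel₀ hζ0, one_mul] at h
    exact h
  -- key identity
  have hcos : (ζ - 1)^2 = ζ * (2*Complex.cos (α:ℂ) - 2) := by
    have h2 : 2 * Complex.cos (α:ℂ) = Complex.exp ((α:ℂ)*Complex.I) + Complex.exp (-(α:ℂ)*Complex.I) :=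
      Complex.two_cos _
    have h3 : Complex.exp (-(α:ℂ)*Complex.I) = ζ⁻¹ := by
      rw [hζdef, ← Complex.exp_neg]; ring_nf
    rw [h2, h3, ← hζdef]
    field_simp
    ring
  -- simplify derivative value
  have hval : 1 * Complex.exp ((t:ℂ)*(ζ+1)/(2*(ζ-1))) +
        ζ * (Complex.exp ((t:ℂ)*(ζ+1)/(2*(ζ-1))) *
          (((t:ℂ)*(2*(ζ-1)) - (t:ℂ)*(ζ+1)*2)/(2*(ζ-1))^2))
      = (((t + 2*(1 - Real.cos α))/(2*(1 - Real.cos α)) : ℝ) : ℂ) * ζ⁻¹ := by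
    rw [hexp]
    have hcc : ((1:ℂ) - Complex.cos (α:ℂ)) ≠ 0 := by
      rw [← Complex.ofReal_cos]
      intro h
      have : (1:ℝ) - Real.cos α = 0 := by exact_mod_cast h
      linarith
    push_cast
    field_simp
    linear_combination (-(t:ℂ)) * hcos
  rw [hval]
  rw [norm_mul, Complex.norm_real, Real.norm_eq_abs, norm_inv]
  have habs : ‖ζ‖ = 1 := by
    rw [hζdef, Complex.norm_exp]
    simp
  rw [habs]
  rw [abs_of_nonneg (by positivity)]
  simp
end

section
/- Let t ∈ ℝ. For every z in the open unit disk, exp(tz/(z−1)) = 1 + ∑_{n=1}^{∞} ( ∑_{i=0}^{n−1} (n−1 choose i) · (−t)^{i+1}/(i+1)! ) zⁿ, where the series on the right-hand side converges for |z| < 1. -/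
/-- For `t ∈ ℝ` and `z` in the open unit disk,
`exp(tz/(z-1)) = 1 + ∑_{n≥1} (∑_{i=0}^{n-1} (n-1 choose i) (-t)^{i+1}/(i+1)!) zⁿ`. -/
theorem stmt_19 (t : ℝ) (z : ℂ) (hz : ‖z‖ < 1) :
    HasSum (fun n : ℕ =>
      (∑ i ∈ Finset.range (n + 1),
          (n.choose i : ℂ) * (-(t : ℂ)) ^ (i + 1) / ((i + 1).factorial : ℂ)) *
        z ^ (n + 1))
      (Complex.exp ((t : ℂ) * z / (z - 1)) - 1) := by
  have hzn : ‖z‖ < 1 := hz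
  have hz1 : z - 1 ≠ 0 := by
    intro h
    rw [sub_eq_zero] at h
    rw [h] at hz
    simp at hz
  have hz1' : (1 : ℂ) - z ≠ 0 := fun h => hz1 (by rw [sub_eq_zero] at h ⊢; exact h.symm)
  have hz1r : (0:ℝ) < 1 - ‖z‖ := by linarith
  set w : ℂ := (t : ℂ) * z / (z - 1) with hw
  set F : ℕ × ℕ → ℂ := fun p =>
    (-(t:ℂ))^(p.1+1) / (((p.1+1).factorial : ℕ) : ℂ) *
      ((((p.2 + p.1).choose p.1 : ℕ) : ℂ) * z ^ p.2) * z^(p.1+1) with hF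
  -- fiberwise complex sums
  have fib : ∀ k : ℕ, HasSum (fun m => F (k, m))
      (w ^ (k+1) / (((k+1).factorial : ℕ) : ℂ)) := by
    intro k
    have h1 := hasSum_choose_mul_geometric_of_norm_lt_one (𝕜 := ℂ) k hzn
    have h2 := (h1.mul_left ((-(t:ℂ))^(k+1) / (((k+1).factorial : ℕ) : ℂ))).mul_right (z^(k+1))
    suffices hs : w ^ (k+1) / (((k+1).factorial : ℕ) : ℂ) = (-(t:ℂ))^(k+1) / (((k+1).factorial : ℕ) : ℂ) * (1 / (1 - z)^(k+1)) * z^(k+1) by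
      rw [hs]; exact h2
    have hwpow : w = (-(t:ℂ)) * z / (1 - z) := by
      rw [hw]; field_simp; ring
    have hfac : (((k+1).factorial : ℕ) : ℂ) ≠ 0 :=
      Nat.cast_ne_zero.2 (Nat.factorial_ne_zero _)
    rw [hwpow, div_pow, mul_pow]
    ring
  -- norms
  set G : ℕ × ℕ → ℝ := fun p =>
    |t|^(p.1+1) / (((p.1+1).factorial : ℕ) : ℝ) *
      ((((p.2 + p.1).choose p.1 : ℕ) : ℝ) * ‖z‖ ^ p.2) * ‖z‖^(p.1+1) with hG
  have hnormF : ∀ p, ‖F p‖ = G p := by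
    intro p
    simp only [hF, hG, norm_mul, norm_div, norm_pow, norm_neg, Complex.norm_real,
      Real.norm_eq_abs, Complex.norm_natCast]
  have fibG : ∀ k : ℕ, HasSum (fun m => G (k, m))
      (|t|^(k+1) / (((k+1).factorial : ℕ) : ℝ) * (1 / (1 - ‖z‖)^(k+1)) * ‖z‖^(k+1)) := by
    intro k
    have h1 := hasSum_choose_mul_geometric_of_norm_lt_one (𝕜 := ℝ) k
      (r := ‖z‖) (by rwa [Real.norm_eq_abs, abs_norm])
    exact (h1.mul_left (|t|^(k+1) / (((k+1).factorial : ℕ) : ℝ))).mul_right (‖z‖^(k+1))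
  have hsumG : Summable G := by
    apply (summable_prod_of_nonneg ?_).2
    · constructor
      · intro k; exact (fibG k).summable
      · apply Summable.congr (f := fun k : ℕ =>
          (|t| * ‖z‖ / (1 - ‖z‖)) ^ (k+1) / (((k+1).factorial : ℕ) : ℝ))
        · exact (summable_nat_add_iff 1).2 (Real.summable_pow_div_factorial _)
        · intro k
          rw [(fibG k).tsum_eq, div_pow, mul_pow]
          ring
    · intro p
      exact hnormF p ▸ norm_nonneg (F p)
  have hsumF : Summable F := by
    apply Summable.of_norm
    exact hsumG.congr fun p => (hnormF p).symm
  obtain ⟨S, hS⟩ := hsumF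
  have hks : HasSum (fun k : ℕ => w ^ (k+1) / (((k+1).factorial : ℕ) : ℂ)) S :=
    hS.prod_fiberwise fib
  have hexp : HasSum (fun k : ℕ => w ^ k / ((k.factorial : ℕ) : ℂ)) (Complex.exp w) := by
    rw [Complex.exp_eq_exp_ℂ]
    exact NormedSpace.expSeries_div_hasSum_exp w
  have hexp' : HasSum (fun k : ℕ => w ^ (k+1) / (((k+1).factorial : ℕ) : ℂ))
      (Complex.exp w - 1) := by
    have h2 := (hasSum_nat_add_iff' (f := fun k : ℕ => w ^ k / ((k.factorial : ℕ) : ℂ)) 1).2 hexp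
    simp only [Finset.range_one, Finset.sum_singleton, pow_zero, Nat.factorial_zero,
      Nat.cast_one] at h2
    simpa using h2
  have hSval : S = Complex.exp w - 1 := hks.unique hexp'
  rw [hSval] at hS
  -- regroup via antidiagonal
  have hsig : HasSum (F ∘ Finset.HasAntidiagonal.sigmaAntidiagonalEquivProd) (Complex.exp w - 1) :=
    (Equiv.hasSum_iff _).2 hS
  have final : HasSum (fun n : ℕ => ∑ p ∈ Finset.HasAntidiagonal.antidiagonal n, F p)
      (Complex.exp w - 1) := by
    apply hsig.sigma
    intro n
    exact (Finset.HasAntidiagonal.antidiagonal n).hasSum F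
  have heq : (fun n : ℕ => ∑ p ∈ Finset.HasAntidiagonal.antidiagonal n, F p) =
      (fun n : ℕ => (∑ i ∈ Finset.range (n + 1),
          (n.choose i : ℂ) * (-(t : ℂ)) ^ (i + 1) / ((i + 1).factorial : ℂ)) * z ^ (n + 1)) := by
    funext n
    rw [Finset.Nat.sum_antidiagonal_eq_sum_range_succ_mk, Finset.sum_mul]
    apply Finset.sum_congr rfl
    intro i hi
    rw [Finset.mem_range] at hi
    have h1 : n - i + i = n := Nat.sub_add_cancel (Nat.lt_succ_iff.1 hi)
    have hz2 : z ^ (n - i) * z ^ (i + 1) = z ^ (n + 1) := by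
      rw [← pow_add]; congr 1; omega
    simp only [hF, h1]
    rw [← hz2]
    ring
  rwa [heq] at final
end
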